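/- arXiv:cs/0410032 — 9 statements merged into one kernel-verified Lean document; each statement's English description precedes it below -/
import Mathlib

section
/- For every integer n ≥ 3, there exists a deterministic finite automaton M with exactly n states over the two-letter alphabet {0,1} such that every deterministic finite automaton accepting the language L(M)·L(M) (the concatenation of L(M) with itself) has at least n·2^n − 2^(n−1) states. -/
namespace SqSC
open List
open Fin.CommRing

variable (m : ℕ)

abbrev la : Fin (m+3) := Fin.last (m+2)
def bf : Fin (m+3) → Fin (m+3) := fun s => if s = 1 then 0 else s
def M : DFA (Fin 2) (Fin (m+3)) where
  step q c := if c = 0 then q + 1 else bf m q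
  start := 0
  accept := {la m}
def D : DFA (Fin 2) (Fin (m+3) × Finset (Fin (m+3))) where
  step p c := ((M m).step p.1 c,
    (p.2.image fun s => (M m).step s c) ∪ (if (M m).step p.1 c = la m then {0} else ∅))
  start := (0, ∅)
  accept := {p | la m ∈ p.2}
lemma la_ne_zero : la m ≠ 0 := by simp [Fin.ext_iff]
lemma one_ne_la : (1 : Fin (m+3)) ≠ la m := by simp [Fin.ext_iff]

def Reach (p : Fin (m+3) × Finset (Fin (m+3))) : Prop := ∃ w, (D m).eval w = p

lemma reach_start : Reach m (0, ∅) := ⟨[], rfl⟩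

lemma reach_step {p} (h : Reach m p) (c : Fin 2) : Reach m ((D m).step p c) := by
  obtain ⟨w, hw⟩ := h
  exact ⟨w ++ [c], by rw [DFA.eval_append_singleton, hw]⟩

lemma val_sub (a b : Fin (m+3)) : (a - b).val = (m + 3 - b.val + a.val) % (m+3) := by
  rw [Fin.sub_def]

lemma val_one' : (1 : Fin (m+3)).val = 1 := rfl

lemma val_sub_one {s : Fin (m+3)} (hs : s ≠ 0) : (s - 1).val = s.val - 1 := by
  have h := val_sub m s 1
  rw [val_one'] at h
  have hlt := s.isLt
  have hne : s.val ≠ 0 := fun hc => hs (Fin.ext hc)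
  have he : m + 3 - 1 + s.val = (m+3) + (s.val - 1) := by omega
  rw [he, Nat.add_mod_left, Nat.mod_eq_of_lt (by omega)] at h
  exact h

lemma neg_one_val : ((0 : Fin (m+3)) - 1).val = m + 2 := by
  have h := val_sub m 0 1
  rw [val_one'] at h
  simp only [Fin.val_zero, Nat.add_zero] at h
  rw [Nat.mod_eq_of_lt (by omega)] at h
  omega

lemma sub_one_ne_zero {s : Fin (m+3)} (hs : s ≠ 1) : s - 1 ≠ 0 := by
  intro hc
  apply hs
  have : s - 1 + 1 = 0 + 1 := by rw [hc]
  rwa [sub_add_cancel, zero_add] at this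

lemma bf_eq_la {q : Fin (m+3)} : bf m q = la m ↔ q = la m := by
  unfold bf
  split_ifs with h
  · constructor
    · intro h0; exact absurd h0 (Ne.symm (la_ne_zero m))
    · intro hq; rw [h] at hq; exact absurd hq (one_ne_la m)
  · rfl

lemma stepA (q : Fin (m+3)) (S : Finset (Fin (m+3))) :
    (D m).step (q, S) 0 = (q + 1, S.image (· + 1) ∪ if q + 1 = la m then {0} else ∅) := by
  simp [D, M]

lemma stepB (q : Fin (m+3)) (S : Finset (Fin (m+3))) :
    (D m).step (q, S) 1 = (bf m q, S.image (bf m) ∪ if q = la m then {0} else ∅) := by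
  simp [D, M, bf_eq_la]

lemma runA (S : Finset (Fin (m+3))) (k : ℕ) (hk : k ≤ m+2) (h : Reach m (0, S)) :
    Reach m ((k : Fin (m+3)), S.image (· + (k : Fin (m+3))) ∪ if k = m+2 then {0} else ∅) := by
  induction k with
  | zero =>
    simpa using h
  | succ k ih =>
    have hk' : k ≤ m+2 := by omega
    have hkne : k ≠ m+2 := by omega
    have hcast : ((k+1 : ℕ) : Fin (m+3)) = (k : Fin (m+3)) + 1 := by push_cast; ring
    have h1 := reach_step m (ih hk') 0
    rw [stepA, if_neg hkne, Finset.union_empty, Finset.image_image, ← hcast] at h1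
    have hcond : (((k+1:ℕ) : Fin (m+3)) = la m) ↔ (k + 1 = m + 2) := by
      rw [Fin.ext_iff, Fin.val_cast_of_lt (by omega : k+1 < m+3)]
      exact Iff.rfl
    have hite : (if ((k+1:ℕ) : Fin (m+3)) = la m then ({0} : Finset (Fin (m+3))) else ∅) =
        (if k + 1 = m + 2 then {0} else ∅) := by
      by_cases hc : k + 1 = m + 2
      · rw [if_pos (hcond.2 hc), if_pos hc]
      · rw [if_neg (fun hx => hc (hcond.1 hx)), if_neg hc]
    rw [hite] at h1
    have hfun : S.image ((· + 1) ∘ (· + (k : Fin (m+3)))) = S.image (· + ((k+1:ℕ) : Fin (m+3))) := by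
      apply Finset.image_congr
      intro s _
      simp only [Function.comp_apply, hcast]
      ring
    rwa [hfun] at h1

lemma cast_m2_eq_la : ((m+2 : ℕ) : Fin (m+3)) = la m := by
  rw [Fin.ext_iff, Fin.val_cast_of_lt (by omega)]
  rfl

lemma opU (S : Finset (Fin (m+3))) (h : Reach m (0, S)) : Reach m (0, insert 1 S) := by
  have h1 := runA m S (m+2) le_rfl h
  rw [if_pos rfl, cast_m2_eq_la] at h1
  have h2 := reach_step m h1 0
  rw [stepA] at h2
  have hla1 : la m + 1 = 0 := by
    rw [Fin.ext_iff]
    simp [Fin.add_def]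
  rw [hla1, if_neg (Ne.symm (la_ne_zero m))] at h2
  convert h2 using 2
  rw [Finset.union_empty, Finset.image_union, Finset.image_image, Finset.image_singleton,
    zero_add]
  rw [show S.image ((· + 1) ∘ (· + la m)) = S.image id from Finset.image_congr (by
    intro s _
    simp only [Function.comp_apply, id_eq, add_assoc, hla1, add_zero])]
  rw [Finset.image_id, Finset.insert_eq, Finset.union_comm]

def ph : Fin (m+3) → Fin (m+3) := fun s => if s = 0 then 0 else s + 1

lemma opV (S : Finset (Fin (m+3))) (h : Reach m (0, S)) : Reach m (0, S.image (ph m)) := by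
  have h1 := reach_step m h 0
  rw [stepA, zero_add, if_neg (one_ne_la m), Finset.union_empty] at h1
  have h2 := reach_step m h1 1
  rw [stepB, if_neg (one_ne_la m), Finset.union_empty] at h2
  have hbf1 : bf m 1 = 0 := by simp [bf]
  rw [hbf1, Finset.image_image] at h2
  convert h2 using 2
  apply Finset.image_congr
  intro s _
  simp only [Function.comp_apply, ph, bf]
  by_cases hs : s = 0
  · subst hs
    simp
  · rw [if_neg hs, if_neg (by
      intro hc
      exact hs (by
        have := add_right_cancel (a := s) (b := (1:Fin (m+3))) (c := 0)
        simp only [zero_add] at this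
        exact this hc))]

def rho : Fin (m+3) → ℕ := fun s => if s = 0 then m+2 else s.val - 1
def mu (S : Finset (Fin (m+3))) : ℕ := S.card + ∑ s ∈ S, rho m s

lemma reach0 (S : Finset (Fin (m+3))) : Reach m (0, S) := by
  suffices key : ∀ k S, mu m S = k → Reach m (0, S) from key (mu m S) S rfl
  intro k
  induction k using Nat.strong_induction_on with
  | _ k ih =>
    intro S hS
    by_cases h1 : (1 : Fin (m+3)) ∈ S
    · have hrec : Reach m (0, S.erase 1) := by
        apply ih (mu m (S.erase 1)) _ _ rfl
        subst hS
        unfold mu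
        have hc : (S.erase 1).card = S.card - 1 := Finset.card_erase_of_mem h1
        have hsum : ∑ s ∈ S.erase 1, rho m s = ∑ s ∈ S, rho m s :=
          Finset.sum_erase _ (by simp [rho, Fin.ext_iff])
        have hpos : 0 < S.card := Finset.card_pos.2 ⟨1, h1⟩
        omega
      have := opU m _ hrec
      rwa [Finset.insert_erase h1] at this
    · by_cases h0 : S = ∅
      · subst h0; exact reach_start m
      · set T := S.image (· - (1 : Fin (m+3))) with hTdef
        have hinj : Function.Injective (· - (1 : Fin (m+3))) := fun a b hab => by
          simpa using congrArg (· + (1 : Fin (m+3))) hab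
        have hT : T.image (ph m) = S := by
          rw [hTdef, Finset.image_image]
          rw [show S.image (ph m ∘ (· - 1)) = S.image id from Finset.image_congr (by
            intro s hs
            simp only [Function.comp_apply, id_eq, ph]
            by_cases hs0 : s = 0
            · subst hs0
              have hne : (0 : Fin (m+3)) - 1 ≠ 0 := by
                intro hc
                have := congrArg Fin.val hc
                rw [neg_one_val] at this
                simp at this
              rw [if_neg hne, sub_add_cancel]
            · rw [if_neg (by
                intro hc
                apply h1
                have : s - 1 + 1 = 0 + 1 := by rw [hc]
                rw [sub_add_cancel, zero_add] at this
                rwa [this] at hs), sub_add_cancel])]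
          exact Finset.image_id
        have hmuT : mu m T < mu m S := by
          unfold mu
          have hcard : T.card = S.card := Finset.card_image_of_injective _ hinj
          have hsum : ∑ t ∈ T, rho m t = ∑ s ∈ S, rho m (s - 1) := by
            rw [hTdef]
            exact Finset.sum_image (fun a _ b _ h => hinj h)
          have hlt : ∑ s ∈ S, rho m (s - 1) < ∑ s ∈ S, rho m s := by
            apply Finset.sum_lt_sum_of_nonempty (Finset.nonempty_iff_ne_empty.2 h0)
            intro s hs
            unfold rho
            by_cases hs0 : s = 0
            · subst hs0
              have hne : (0 : Fin (m+3)) - 1 ≠ 0 := by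
                intro hc
                have := congrArg Fin.val hc
                rw [neg_one_val] at this
                simp at this
              rw [if_pos rfl, if_neg hne, neg_one_val]
              omega
            · have hs1 : s ≠ 1 := fun hc => h1 (hc ▸ hs)
              have hzero : s - 1 ≠ 0 := sub_one_ne_zero m hs1
              rw [if_neg hs0, if_neg hzero, val_sub_one m hs0]
              have hsv : 2 ≤ s.val := by
                have hsv0 : s.val ≠ 0 := fun hc => hs0 (Fin.ext hc)
                have hsv1 : s.val ≠ 1 := fun hc => hs1 (Fin.ext hc)
                omega
              omega
          omega
        have hrec : Reach m (0, T) := ih (mu m T) (hS ▸ hmuT) T rfl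
        have := opV m _ hrec
        rwa [hT] at this

lemma reach_all (q : Fin (m+3)) (S : Finset (Fin (m+3))) (hq : q = la m → (0 : Fin (m+3)) ∈ S) :
    Reach m (q, S) := by
  by_cases hql : q = la m
  · subst hql
    have h0 : (0 : Fin (m+3)) ∈ S := hq rfl
    have h := runA m ((S.erase 0).image (· - ((m+2 : ℕ) : Fin (m+3)))) (m+2) le_rfl
      (reach0 m _)
    rw [if_pos rfl, Finset.image_image] at h
    rw [show ((S.erase 0).image ((· + ((m+2:ℕ) : Fin (m+3))) ∘ (· - ((m+2:ℕ) : Fin (m+3))))) =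
      (S.erase 0).image id from Finset.image_congr (by
        intro s _
        simp [sub_add_cancel])] at h
    rw [Finset.image_id, cast_m2_eq_la] at h
    have heq : S.erase 0 ∪ {0} = S := by
      rw [Finset.union_comm, ← Finset.insert_eq, Finset.insert_erase h0]
    rwa [heq] at h
  · have hk : q.val ≤ m+2 := by omega
    have hkne : q.val ≠ m+2 := fun hc => hql (Fin.ext hc)
    have h := runA m (S.image (· - q)) q.val hk (reach0 m _)
    rw [if_neg hkne, Finset.union_empty, Finset.image_image, Fin.cast_val_eq_self] at h
    rwa [show S.image ((· + q) ∘ (· - q)) = S.image id from Finset.image_congr (by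
      intro s _
      simp [sub_add_cancel]), Finset.image_id] at h

lemma la_add_one : la m + 1 = 0 := by
  rw [Fin.ext_iff]
  simp [Fin.add_def]

def tq (q : Fin (m+3)) : ℕ := if q = la m then m+3 else (la m - q).val

lemma tq_pos (q : Fin (m+3)) : 1 ≤ tq m q := by
  unfold tq
  split_ifs with h
  · omega
  · have : la m - q ≠ 0 := sub_ne_zero.2 (Ne.symm h)
    have : (la m - q).val ≠ 0 := fun hc => this (Fin.ext hc)
    omega

lemma evalFrom_cons (p : Fin (m+3) × Finset (Fin (m+3))) (c : Fin 2) (w : List (Fin 2)) :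
    (D m).evalFrom p (c :: w) = (D m).evalFrom ((D m).step p c) w := rfl

lemma memA_full : ∀ (k : ℕ) (q : Fin (m+3)) (S : Finset (Fin (m+3))),
    la m ∈ ((D m).evalFrom (q, S) (List.replicate k (0 : Fin 2))).2 ↔
      (la m - (k : Fin (m+3)) ∈ S ∨ (tq m q ≤ k ∧ q + (k : Fin (m+3)) + 2 = 0)) := by
  intro k
  induction k with
  | zero =>
    intro q S
    simp only [List.replicate_zero, DFA.evalFrom_nil, Nat.cast_zero, sub_zero]
    have := tq_pos m q
    constructor
    · intro h; exact Or.inl h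
    · rintro (h | ⟨h1, _⟩)
      · exact h
      · omega
  | succ k ih =>
    intro q S
    rw [List.replicate_succ, evalFrom_cons, stepA, ih]
    have hcast : ((k+1 : ℕ) : Fin (m+3)) = (k : Fin (m+3)) + 1 := by push_cast; ring
    have hm1 : la m = -1 := by
      have h := la_add_one m
      have := eq_neg_of_add_eq_zero_left h
      exact this
    have f1 : la m - (k : Fin (m+3)) ∈ S.image (· + 1) ↔ la m - ((k+1 : ℕ) : Fin (m+3)) ∈ S := by
      rw [Finset.mem_image, hcast]
      constructor
      · rintro ⟨s, hs, hs1⟩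
        have heq : s = la m - ((k : Fin (m+3)) + 1) := by linear_combination hs1
        rwa [← heq]
      · intro h
        exact ⟨la m - ((k : Fin (m+3)) + 1), h, by ring⟩
    have fC : ((q + 1) + (k : Fin (m+3)) + 2 = 0) ↔ (q + ((k+1:ℕ) : Fin (m+3)) + 2 = 0) := by
      rw [hcast]
      constructor <;> intro h <;> linear_combination h
    by_cases hq1 : q + 1 = la m
    · rw [if_pos hq1]
      have hqla : q ≠ la m := by
        intro hc
        apply la_ne_zero m
        have h0 := la_add_one m
        rw [hc] at hq1
        linear_combination h0 - hq1
      have htq : tq m q ≤ k + 1 := by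
        unfold tq
        rw [if_neg hqla]
        have : la m - q = 1 := by linear_combination - hq1
        rw [this, val_one']
        omega
      have hkla : (la m - (k : Fin (m+3)) ∈ ({0} : Finset (Fin (m+3)))) ↔ ((k : Fin (m+3)) = la m) := by
        rw [Finset.mem_singleton, sub_eq_zero, eq_comm]
      have hC2 : (q + ((k+1:ℕ) : Fin (m+3)) + 2 = 0) ↔ ((k : Fin (m+3)) = la m) := by
        rw [hcast]
        constructor
        · intro h
          linear_combination h - 2*(hm1) - hq1 + (la_add_one m) - (la_add_one m)
        · intro h
          linear_combination h + 2*hm1 + hq1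
      have hCk : ((q+1) + (k : Fin (m+3)) + 2 = 0) ↔ ((k : Fin (m+3)) = la m) := by
        rw [hq1, hm1]
        constructor <;> intro h <;> linear_combination h
      rw [Finset.mem_union, hkla, f1]
      unfold tq
      rw [if_pos hq1, hCk, hC2]
      constructor
      · rintro ((h | h) | ⟨h1, h2⟩)
        · exact Or.inl h
        · exact Or.inr ⟨htq, h⟩
        · exact Or.inr ⟨htq, h2⟩
      · rintro (h | ⟨_, h2⟩)
        · exact Or.inl (Or.inl h)
        · exact Or.inl (Or.inr h2)
    · rw [if_neg hq1, Finset.union_empty, f1, fC]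
      have htq : tq m q = tq m (q + 1) + 1 := by
        unfold tq
        by_cases hqla : q = la m
        · rw [if_pos hqla, if_neg hq1, hqla, la_add_one, sub_zero]
          simp [la]
        · rw [if_neg hqla, if_neg hq1]
          have hsub : la m - (q + 1) = (la m - q) - 1 := by ring
          have hne0 : la m - q ≠ 0 := sub_ne_zero.2 (Ne.symm hqla)
          rw [hsub, val_sub_one m hne0]
          have : (la m - q).val ≠ 0 := fun hc => hne0 (Fin.ext hc)
          omega
      rw [htq]
      constructor
      · rintro (h | ⟨h1, h2⟩)
        · exact Or.inl h
        · exact Or.inr ⟨by omega, h2⟩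
      · rintro (h | ⟨h1, h2⟩)
        · exact Or.inl h
        · exact Or.inr ⟨by omega, h2⟩

lemma memA_short (k : ℕ) (hk : k < m+3) (q : Fin (m+3)) (S : Finset (Fin (m+3))) :
    la m ∈ ((D m).evalFrom (q, S) (List.replicate k (0 : Fin 2))).2 ↔
      la m - (k : Fin (m+3)) ∈ S := by
  rw [memA_full]
  constructor
  · rintro (h | ⟨h1, h2⟩)
    · exact h
    · exfalso
      have hm1 : la m = -1 := eq_neg_of_add_eq_zero_left (la_add_one m)
      by_cases hqla : q = la m
      · unfold tq at h1
        rw [if_pos hqla] at h1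
        omega
      · unfold tq at h1
        rw [if_neg hqla] at h1
        have hlq : la m - q = ((k+1 : ℕ) : Fin (m+3)) := by
          push_cast
          linear_combination hm1 - h2
        by_cases hk1 : k + 1 < m + 3
        · rw [hlq, Fin.val_cast_of_lt hk1] at h1
          omega
        · have hk2 : k + 1 = m + 3 := by omega
          have hz : ((k+1 : ℕ) : Fin (m+3)) = 0 := by
            rw [hk2, Fin.natCast_self]
          rw [hz] at hlq
          exact hqla (sub_eq_zero.1 hlq).symm
  · intro h; exact Or.inl h

lemma evalFrom_fst (w : List (Fin 2)) : ∀ p, ((D m).evalFrom p w).1 = (M m).evalFrom p.1 w := by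
  induction w with
  | nil => intro p; rfl
  | cons c w ih =>
    intro p
    rw [show (D m).evalFrom p (c :: w) = (D m).evalFrom ((D m).step p c) w from rfl,
      show (M m).evalFrom p.1 (c :: w) = (M m).evalFrom ((M m).step p.1 c) w from rfl]
    exact ih _

lemma M_runA (k : ℕ) : ∀ q : Fin (m+3), (M m).evalFrom q (List.replicate k (0:Fin 2)) = q + (k : Fin (m+3)) := by
  induction k with
  | zero => intro q; simp [DFA.evalFrom_nil]
  | succ k ih =>
    intro q
    rw [List.replicate_succ]
    have hstep : (M m).evalFrom q ((0:Fin 2) :: List.replicate k 0) =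
        (M m).evalFrom ((M m).step q 0) (List.replicate k 0) := rfl
    rw [hstep, ih]
    have : (M m).step q 0 = q + 1 := by simp [M]
    rw [this]
    push_cast
    ring

lemma cast_sum2 : ((2*m+4 : ℕ) : Fin (m+3)) + 2 = 0 := by
  have h : ((2*m+4 : ℕ) : Fin (m+3)) + 2 = ((2*m+6 : ℕ) : Fin (m+3)) := by
    push_cast
    ring
  rw [h, show 2*m+6 = (m+3)+(m+3) from by ring, Nat.cast_add, Fin.natCast_self, add_zero]

lemma la_sub_L : la m - ((2*m+4 : ℕ) : Fin (m+3)) = 1 := by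
  have h0 := la_add_one m
  have hL := cast_sum2 m
  linear_combination h0 - hL

lemma long_pos (U : Finset (Fin (m+3))) :
    la m ∈ ((D m).evalFrom (0, U) (List.replicate (2*m+4) (0:Fin 2))).2 := by
  rw [memA_full]
  right
  constructor
  · unfold tq
    rw [if_neg (Ne.symm (la_ne_zero m)), sub_zero]
    have : (la m).val = m + 2 := rfl
    omega
  · rw [zero_add]
    exact cast_sum2 m

lemma long_neg (e : Fin (m+3)) (U : Finset (Fin (m+3))) (he : e ≠ 0)
    (hU : (1 : Fin (m+3)) ∉ U) :
    la m ∉ ((D m).evalFrom (e, U) (List.replicate (2*m+4) (0:Fin 2))).2 := by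
  rw [memA_full]
  rintro (h | ⟨h1, h2⟩)
  · rw [la_sub_L] at h
    exact hU h
  · exact he (by linear_combination h2 - cast_sum2 m)

lemma one_not_mem_bf_image (T : Finset (Fin (m+3))) :
    (1 : Fin (m+3)) ∉ T.image (bf m) := by
  intro h
  obtain ⟨s, _, hs⟩ := Finset.mem_image.1 h
  unfold bf at hs
  split_ifs at hs with h1
  · exact zero_ne_one hs
  · exact h1 hs

lemma bf_zero : bf m 0 = 0 := by
  unfold bf
  rw [if_neg]
  exact zero_ne_one

lemma sep_q (p p' : Fin (m+3)) (S : Finset (Fin (m+3))) (hne : p' ≠ p) (hp1 : p' ≠ p + 1) :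
    ∃ z, la m ∈ ((D m).evalFrom (p, S) z).2 ∧ la m ∉ ((D m).evalFrom (p', S) z).2 := by
  set j := ((0 : Fin (m+3)) - p).val with hj
  set u := List.replicate j (0 : Fin 2) with hu
  refine ⟨u ++ (1:Fin 2) :: List.replicate (2*m+4) (0:Fin 2), ?_, ?_⟩
  · set x₁ := (D m).evalFrom (p, S) u with hx
    have hx1 : x₁.1 = 0 := by
      rw [hx, hu, evalFrom_fst m, M_runA, hj, Fin.cast_val_eq_self]
      ring
    have h1 : (D m).evalFrom (p, S) (u ++ (1:Fin 2) :: List.replicate (2*m+4) (0:Fin 2)) =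
        (D m).evalFrom ((D m).step (x₁.1, x₁.2) 1) (List.replicate (2*m+4) (0:Fin 2)) := by
      rw [DFA.evalFrom_of_append, ← hx, evalFrom_cons, Prod.mk.eta]
    rw [h1, stepB, hx1, bf_zero, if_neg (Ne.symm (la_ne_zero m)), Finset.union_empty]
    exact long_pos m _
  · set x₂ := (D m).evalFrom (p', S) u with hx
    have hx2 : x₂.1 = p' - p := by
      rw [hx, hu, evalFrom_fst m, M_runA, hj, Fin.cast_val_eq_self]
      ring
    have he0 : p' - p ≠ 0 := sub_ne_zero.2 hne
    have he1 : p' - p ≠ 1 := fun hc => hp1 (by linear_combination hc)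
    have h1 : (D m).evalFrom (p', S) (u ++ (1:Fin 2) :: List.replicate (2*m+4) (0:Fin 2)) =
        (D m).evalFrom ((D m).step (x₂.1, x₂.2) 1) (List.replicate (2*m+4) (0:Fin 2)) := by
      rw [DFA.evalFrom_of_append, ← hx, evalFrom_cons, Prod.mk.eta]
    rw [h1, stepB, hx2]
    have hbf : bf m (p' - p) = p' - p := by
      unfold bf
      rw [if_neg he1]
    rw [hbf]
    apply long_neg m _ _ he0
    intro hc
    rcases Finset.mem_union.1 hc with hc | hc
    · exact one_not_mem_bf_image m _ hc
    · split_ifs at hc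
      · exact zero_ne_one (Finset.mem_singleton.1 hc).symm
      · exact absurd hc (Finset.notMem_empty _)

lemma sep_snd (q₁ q₂ : Fin (m+3)) (S₁ S₂ : Finset (Fin (m+3))) (h : S₁ ≠ S₂) :
    ∃ z, ¬(la m ∈ ((D m).evalFrom (q₁, S₁) z).2 ↔ la m ∈ ((D m).evalFrom (q₂, S₂) z).2) := by
  have hex : ∃ s, ¬(s ∈ S₁ ↔ s ∈ S₂) := by
    by_contra hc
    push_neg at hc
    exact h (Finset.ext fun s => hc s)
  obtain ⟨s, hs⟩ := hex
  refine ⟨List.replicate (la m - s).val (0:Fin 2), fun hiff => hs ?_⟩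
  rw [memA_short m _ (Fin.is_lt _), memA_short m _ (Fin.is_lt _), Fin.cast_val_eq_self,
    sub_sub_cancel] at hiff
  exact hiff

lemma sep (p₁ p₂ : Fin (m+3) × Finset (Fin (m+3))) (h : p₁ ≠ p₂) :
    ∃ z, ¬(la m ∈ ((D m).evalFrom p₁ z).2 ↔ la m ∈ ((D m).evalFrom p₂ z).2) := by
  obtain ⟨q₁, S₁⟩ := p₁
  obtain ⟨q₂, S₂⟩ := p₂
  by_cases hS : S₁ = S₂
  · subst hS
    have hq : q₁ ≠ q₂ := fun hc => h (by rw [hc])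
    by_cases hq2 : q₂ = q₁ + 1
    · have hq1 : q₁ ≠ q₂ + 1 := by
        intro hc
        have h20 : (1 : Fin (m+3)) + 1 = 0 := by linear_combination - hc - hq2
        have h2 : ((2:ℕ) : Fin (m+3)) = 0 := by push_cast; linear_combination h20
        rw [Fin.ext_iff, Fin.val_cast_of_lt (by omega : 2 < m+3)] at h2
        simp at h2
      obtain ⟨z, hz1, hz2⟩ := sep_q m q₂ q₁ S₁ hq hq1
      exact ⟨z, fun hiff => hz2 (hiff.2 hz1)⟩
    · obtain ⟨z, hz1, hz2⟩ := sep_q m q₁ q₂ S₁ (Ne.symm hq) hq2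
      exact ⟨z, fun hiff => hz2 (hiff.1 hz1)⟩
  · exact sep_snd m q₁ q₂ S₁ S₂ hS

lemma eval_fst (w : List (Fin 2)) : ((D m).eval w).1 = (M m).eval w := evalFrom_fst m w _

lemma eval_snd_mem (w : List (Fin 2)) (s : Fin (m+3)) :
    s ∈ ((D m).eval w).2 ↔ ∃ u v, w = u ++ v ∧ u ∈ (M m).accepts ∧ (M m).eval v = s := by
  induction w using List.reverseRecOn generalizing s with
  | nil =>
    constructor
    · intro h; exact absurd h (by simp [D, DFA.eval_nil])
    · rintro ⟨u, v, huv, hu, hv⟩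
      rw [List.nil_eq, List.append_eq_nil_iff] at huv
      obtain ⟨rfl, rfl⟩ := huv
      rw [DFA.mem_accepts] at hu
      exact absurd hu (by show (0 : Fin (m+3)) ∉ ({la m} : Set (Fin (m+3))); simpa using (la_ne_zero m).symm)
  | append_singleton w c ih =>
    rw [DFA.eval_append_singleton]
    constructor
    · intro h
      rcases Finset.mem_union.1 h with h | h
      · obtain ⟨t, ht, hts⟩ := Finset.mem_image.1 h
        obtain ⟨u, v, rfl, hu, hv⟩ := (ih t).1 ht
        exact ⟨u, v ++ [c], by simp, hu, by rw [DFA.eval_append_singleton, hv, hts]⟩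
      · by_cases hc : (M m).step ((D m).eval w).1 c = la m
        · simp only [hc, if_pos] at h
          rw [Finset.mem_singleton] at h
          refine ⟨w ++ [c], [], by simp, ?_, by simp [M, DFA.eval_nil, h]⟩
          rw [DFA.mem_accepts, DFA.eval_append_singleton, ← eval_fst]
          exact hc
        · simp [hc] at h
    · rintro ⟨u, v, huv, hu, hv⟩
      rcases List.eq_nil_or_concat v with rfl | ⟨v', c', rfl⟩
      · rw [List.append_nil] at huv
        subst huv
        apply Finset.mem_union_right
        rw [DFA.mem_accepts, DFA.eval_append_singleton] at hu
        have : (M m).step ((D m).eval w).1 c = la m := by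
          rw [eval_fst]; exact hu
        simp only [this, if_pos, Finset.mem_singleton]
        rw [← hv]; rfl
      · rw [List.concat_eq_append, ← List.append_assoc] at huv
        obtain ⟨h1, h2⟩ := List.append_inj' huv (by simp)
        obtain rfl := List.singleton_injective h2
        apply Finset.mem_union_left
        refine Finset.mem_image.2 ⟨(M m).eval v', (ih _).2 ⟨u, v', h1, hu, rfl⟩, ?_⟩
        rw [← hv, List.concat_eq_append, DFA.eval_append_singleton]

lemma accepts_D : (D m).accepts = (M m).accepts * (M m).accepts := by
  ext x
  rw [Language.mem_mul, DFA.mem_accepts]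
  have : (D m).eval x ∈ (D m).accept ↔ la m ∈ ((D m).eval x).2 := Iff.rfl
  rw [this, eval_snd_mem]
  constructor
  · rintro ⟨u, v, rfl, hu, hv⟩
    exact ⟨u, hu, v, by rw [DFA.mem_accepts]; exact hv, rfl⟩
  · rintro ⟨u, hu, v, hv, rfl⟩
    exact ⟨u, v, rfl, hu, by rw [DFA.mem_accepts] at hv; exact hv⟩


lemma card_valid :
    Fintype.card {p : Fin (m+3) × Finset (Fin (m+3)) // p.1 = la m → (0:Fin (m+3)) ∈ p.2} =
      (m+3) * 2^(m+3) - 2^(m+2) := by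
  classical
  rw [Fintype.card_subtype]
  have hsplit := Finset.card_filter_add_card_filter_not
    (s := (Finset.univ : Finset (Fin (m+3) × Finset (Fin (m+3)))))
    (p := fun p => p.1 = la m → (0:Fin (m+3)) ∈ p.2)
  have huniv : (Finset.univ : Finset (Fin (m+3) × Finset (Fin (m+3)))).card
      = (m+3) * 2^(m+3) := by
    rw [Finset.card_univ, Fintype.card_prod, Fintype.card_fin, Fintype.card_finset,
      Fintype.card_fin]
  have hneg : (Finset.univ.filter fun p : Fin (m+3) × Finset (Fin (m+3)) =>
      ¬(p.1 = la m → (0:Fin (m+3)) ∈ p.2)).card = 2^(m+2) := by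
    have hcongr : (Finset.univ.filter fun p : Fin (m+3) × Finset (Fin (m+3)) =>
        ¬(p.1 = la m → (0:Fin (m+3)) ∈ p.2)) =
        (Finset.univ.filter fun p : Fin (m+3) × Finset (Fin (m+3)) =>
        p.1 = la m ∧ (0:Fin (m+3)) ∉ p.2) := by
      apply Finset.filter_congr
      intro p _
      constructor
      · intro h
        push_neg at h
        exact h
      · intro h
        push_neg
        exact h
    rw [hcongr, ← Finset.univ_product_univ,
      Finset.filter_product (fun q : Fin (m+3) => q = la m)
        (fun S : Finset (Fin (m+3)) => (0:Fin (m+3)) ∉ S), Finset.card_product]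
    have h1 : (Finset.univ.filter fun q : Fin (m+3) => q = la m).card = 1 := by
      rw [Finset.filter_eq', if_pos (Finset.mem_univ _), Finset.card_singleton]
    have h2 : (Finset.univ.filter fun S : Finset (Fin (m+3)) => (0:Fin (m+3)) ∉ S).card
        = 2^(m+2) := by
      have : (Finset.univ.filter fun S : Finset (Fin (m+3)) => (0:Fin (m+3)) ∉ S) =
          ((Finset.univ : Finset (Fin (m+3))).erase 0).powerset := by
        ext S
        rw [Finset.mem_powerset, Finset.subset_erase, Finset.mem_filter]
        simp [Finset.subset_univ]
      rw [this, Finset.card_powerset, Finset.card_erase_of_mem (Finset.mem_univ _),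
        Finset.card_univ, Fintype.card_fin]
      congr 1
    rw [h1, h2, one_mul]
  have hpow : 2^(m+2) < (m+3) * 2^(m+3) := by
    have : 2^(m+2) < 2^(m+3) := by
      apply Nat.pow_lt_pow_right (by omega)
      omega
    nlinarith [Nat.pow_pos (n := m+3) (show 0 < 2 by omega)]
  omega

end SqSC

/-- For every integer `n ≥ 3`, there exists a DFA `M` with exactly `n` states over the
two-letter alphabet `{0,1}` (here `Fin 2`) such that every DFA accepting the language
`L(M) * L(M)` has at least `n * 2^n - 2^(n-1)` states. -/
theorem square_state_complexity_lower_bound (n : ℕ) (hn : 3 ≤ n) :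
    ∃ (σ : Type) (_ : Fintype σ) (M : DFA (Fin 2) σ),
      Fintype.card σ = n ∧
      ∀ (τ : Type) [Fintype τ] (N : DFA (Fin 2) τ),
        N.accepts = M.accepts * M.accepts →
        n * 2 ^ n - 2 ^ (n - 1) ≤ Fintype.card τ := by
  obtain ⟨m, rfl⟩ : ∃ m, n = m + 3 := ⟨n - 3, by omega⟩
  refine ⟨Fin (m+3), inferInstance, SqSC.M m, by simp, ?_⟩
  intro τ _ N hN
  rw [← SqSC.accepts_D] at hN
  classical
  have hreach : ∀ p : {p : Fin (m+3) × Finset (Fin (m+3)) // p.1 = SqSC.la m → (0:Fin (m+3)) ∈ p.2},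
      ∃ w, (SqSC.D m).eval w = p.1 := by
    intro p
    have := SqSC.reach_all m p.1.1 p.1.2 p.2
    rw [SqSC.Reach] at this
    obtain ⟨w, hw⟩ := this
    exact ⟨w, by rw [hw]⟩
  choose wit hwit using hreach
  have hinj : Function.Injective (fun p => N.eval (wit p)) := by
    intro p₁ p₂ heq
    by_contra hne
    have hne' : p₁.1 ≠ p₂.1 := fun hc => hne (Subtype.ext hc)
    obtain ⟨z, hz⟩ := SqSC.sep m p₁.1 p₂.1 hne'
    apply hz
    have key : ∀ p : {p : Fin (m+3) × Finset (Fin (m+3)) // p.1 = SqSC.la m → (0:Fin (m+3)) ∈ p.2},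
        (SqSC.la m ∈ (((SqSC.D m)).evalFrom p.1 z).2 ↔ (wit p ++ z) ∈ N.accepts) := by
      intro p
      rw [hN, DFA.mem_accepts]
      have h1 : (SqSC.D m).eval (wit p ++ z) = (SqSC.D m).evalFrom ((SqSC.D m).eval (wit p)) z :=
        DFA.evalFrom_of_append _ _ _ _
      rw [h1, hwit p]
      exact Iff.rfl
    rw [key p₁, key p₂, DFA.mem_accepts, DFA.mem_accepts]
    have heval : N.eval (wit p₁ ++ z) = N.eval (wit p₂ ++ z) := by
      have h1 : N.eval (wit p₁ ++ z) = N.evalFrom (N.eval (wit p₁)) z :=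
        DFA.evalFrom_of_append _ _ _ _
      have h2 : N.eval (wit p₂ ++ z) = N.evalFrom (N.eval (wit p₂)) z :=
        DFA.evalFrom_of_append _ _ _ _
      rw [h1, h2, show N.eval (wit p₁) = N.eval (wit p₂) from heq]
    rw [heval]
  have hcard := Fintype.card_le_of_injective _ hinj
  rw [SqSC.card_valid] at hcard
  have hred : m + 3 - 1 = m + 2 := rfl
  rw [hred]
  exact hcard
end

section
/- Fix an integer n ≥ 3 and let M be the DFA over the alphabet {0,1} with state set {0,1,…,n−1}, start state 0, set of final states {n−1}, and transition function δ given by: δ(1,0) = 0; δ(i,0) = i for all i ≠ 1; and δ(i,1) = (i+1) mod n for all i. Then every DFA accepting the language L(M)·L(M) has at least n·2^n − 2^(n−1) states. -/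
open List

namespace WSLB

open scoped Classical
open scoped Fin.NatCast Fin.CommRing

variable {n : ℕ} (M : DFA (Fin 2) (Fin n))

/-- one step of the "profile" automaton for the square language -/
noncomputable def stepP (p : Fin n × Finset (Fin n)) (c : Fin 2) : Fin n × Finset (Fin n) :=
  (M.step p.1 c,
    (p.2.image (fun q => M.step q c)) ∪
      (if M.step p.1 c ∈ M.accept then {M.start} else ∅))

noncomputable def prof (w : List (Fin 2)) : Fin n × Finset (Fin n) :=
  w.foldl (stepP M) (M.start, ∅)

lemma foldl_stepP_fst (w : List (Fin 2)) (p : Fin n × Finset (Fin n)) :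
    (w.foldl (stepP M) p).1 = M.evalFrom p.1 w := by
  induction w generalizing p with
  | nil => rfl
  | cons c w ih => simpa [stepP, DFA.evalFrom] using ih (stepP M p c)

lemma prof_fst (w : List (Fin 2)) : (prof M w).1 = M.eval w := by
  simpa [prof, DFA.eval] using foldl_stepP_fst M w (M.start, ∅)

lemma prof_append (w z : List (Fin 2)) :
    prof M (w ++ z) = z.foldl (stepP M) (prof M w) :=
  List.foldl_append

lemma mem_prof_snd (hε : M.start ∉ M.accept) (w : List (Fin 2)) (q : Fin n) :
    q ∈ (prof M w).2 ↔ ∃ u v, w = u ++ v ∧ u ∈ M.accepts ∧ M.evalFrom M.start v = q := by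
  induction w using List.reverseRecOn generalizing q with
  | nil =>
    simp only [prof, List.foldl_nil]
    constructor
    · intro h; exact absurd h (Finset.notMem_empty q)
    · rintro ⟨u, v, huv, hu, hv⟩
      rcases List.append_eq_nil_iff.1 huv.symm with ⟨rfl, rfl⟩
      rw [DFA.mem_accepts] at hu
      exact absurd hu hε
  | append_singleton w c ih =>
    have hA_iff : (M.step (prof M w).1 c ∈ M.accept) ↔ (w ++ [c]) ∈ M.accepts := by
      rw [DFA.mem_accepts, prof_fst]
      have : M.eval (w ++ [c]) = M.step (M.eval w) c := by
        show M.evalFrom M.start (w ++ [c]) = _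
        rw [DFA.evalFrom_of_append]
        rfl
      rw [this]
    have hstep_singleton : ∀ (s : Fin n) (c : Fin 2), M.evalFrom s [c] = M.step s c := by
      intro s c; rfl
    rw [prof_append]
    simp only [List.foldl_cons, List.foldl_nil]
    show q ∈ (stepP M (prof M w) c).2 ↔ _
    unfold stepP
    simp only [Finset.mem_union, Finset.mem_image]
    constructor
    · intro h
      rcases h with ⟨q', hq', rfl⟩ | h
      · rcases (ih q').1 hq' with ⟨u, v, rfl, hu, hv⟩
        refine ⟨u, v ++ [c], by simp, hu, ?_⟩
        rw [DFA.evalFrom_of_append, hv, hstep_singleton]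
      · by_cases hA : M.step (prof M w).1 c ∈ M.accept
        · rw [if_pos hA] at h
          have hq : q = M.start := Finset.mem_singleton.1 h
          exact ⟨w ++ [c], [], by simp, hA_iff.1 hA, by simp [DFA.evalFrom, hq]⟩
        · rw [if_neg hA] at h
          exact absurd h (Finset.notMem_empty q)
    · rintro ⟨u, v, huv, hu, hv⟩
      rcases v.eq_nil_or_concat with rfl | ⟨v', c', rfl⟩
      · -- v = [], u = w ++ [c]
        rw [List.append_nil] at huv
        subst huv
        right
        rw [if_pos (hA_iff.2 hu)]
        simp [DFA.evalFrom] at hv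
        simp [← hv]
      · -- v = v' ++ [c']
        rw [List.concat_eq_append, ← List.append_assoc] at huv
        have h1 : w = u ++ v' ∧ c = c' := by
          constructor
          · exact (List.append_inj' huv (by simp)).1
          · have := (List.append_inj' huv (by simp)).2
            simpa using this
        obtain ⟨hw, rfl⟩ := h1
        left
        refine ⟨M.evalFrom M.start v', (ih _).2 ⟨u, v', hw, hu, rfl⟩, ?_⟩
        rw [List.concat_eq_append, DFA.evalFrom_of_append, hstep_singleton] at hv
        exact hv

/-- the residual predicate -/
def Fpred (p : Fin n × Finset (Fin n)) (z : List (Fin 2)) : Prop :=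
  (∃ z1 z2, z = z1 ++ z2 ∧ M.evalFrom p.1 z1 ∈ M.accept ∧ z2 ∈ M.accepts) ∨
  (∃ q ∈ p.2, M.evalFrom q z ∈ M.accept)

lemma mem_mul_iff_Fpred (hε : M.start ∉ M.accept) (w z : List (Fin 2)) :
    w ++ z ∈ M.accepts * M.accepts ↔ Fpred M (prof M w) z := by
  rw [Language.mem_mul]
  constructor
  · rintro ⟨a, ha, b, hb, hab⟩
    rcases List.append_eq_append_iff.1 hab with ⟨a', hw, hbz⟩ | ⟨c', ha', hz⟩
    · -- w = a ++ a', b = a' ++ z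
      right
      refine ⟨M.evalFrom M.start a', ?_, ?_⟩
      · exact (mem_prof_snd M hε w _).2 ⟨a, a', hw, ha, rfl⟩
      · rw [← DFA.evalFrom_of_append]
        rw [← hbz]
        exact (DFA.mem_accepts M).1 hb
    · -- a = w ++ c', z = c' ++ b
      left
      refine ⟨c', b, hz, ?_, hb⟩
      rw [DFA.mem_accepts] at ha
      rw [prof_fst]
      have : M.eval a = M.evalFrom (M.eval w) c' := by
        rw [ha']; exact DFA.evalFrom_of_append M M.start w c'
      rw [← this]; exact ha
  · rintro (⟨z1, z2, rfl, h1, h2⟩ | ⟨q, hq, hq2⟩)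
    · refine ⟨w ++ z1, ?_, z2, h2, by simp⟩
      rw [DFA.mem_accepts]
      show M.evalFrom M.start (w ++ z1) ∈ M.accept
      rw [DFA.evalFrom_of_append]
      rw [prof_fst] at h1
      exact h1
    · rcases (mem_prof_snd M hε w q).1 hq with ⟨u, v, rfl, hu, hv⟩
      refine ⟨u, hu, v ++ z, ?_, by simp⟩
      rw [DFA.mem_accepts]
      show M.evalFrom M.start (v ++ z) ∈ M.accept
      rw [DFA.evalFrom_of_append, hv]
      exact hq2



section Spec
variable {n : ℕ} [NeZero n]

lemma val_one (hn : 3 ≤ n) : ((1 : Fin n)).val = 1 := by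
  rw [Fin.val_one']; exact Nat.mod_eq_of_lt (by omega)

lemma val_neg_one (hn : 3 ≤ n) : ((-1 : Fin n)).val = n - 1 := by
  rw [Fin.neg_def, val_one hn]
  show (n - 1) % n = n - 1
  exact Nat.mod_eq_of_lt (by omega)

lemma val_cast_lt (m : ℕ) (h : m < n) : (((m : ℕ) : Fin n)).val = m := by
  rw [Fin.val_natCast]; exact Nat.mod_eq_of_lt h

lemma val_add_cast (a : Fin n) (s : ℕ) (h : a.val + s < n) : (a + (s : Fin n)).val = a.val + s := by
  rw [Fin.add_def, Fin.val_natCast, Nat.mod_eq_of_lt (show s < n by omega)]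
  exact Nat.mod_eq_of_lt h

lemma val_sub_cast (a : Fin n) (s : ℕ) (hs : s ≤ a.val) : (a - (s : Fin n)).val = a.val - s := by
  rw [Fin.sub_def, Fin.val_natCast]
  have h1 : s % n = s := Nat.mod_eq_of_lt (lt_of_le_of_lt hs a.isLt)
  rw [h1]
  have h2 : n - s + a.val = n + (a.val - s) := by have := a.isLt; omega
  show (n - s + a.val) % n = a.val - s
  rw [h2, Nat.add_mod_left]
  exact Nat.mod_eq_of_lt (by have := a.isLt; omega)

lemma zero_ne_neg_one (hn : 3 ≤ n) : (0 : Fin n) ≠ -1 := by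
  intro h
  have := congrArg Fin.val h
  rw [Fin.val_zero, val_neg_one hn] at this
  omega

lemma one_ne_neg_one (hn : 3 ≤ n) : (1 : Fin n) ≠ -1 := by
  intro h
  have := congrArg Fin.val h
  rw [val_one hn, val_neg_one hn] at this
  omega

lemma val_add_one (hn : 3 ≤ n) (a : Fin n) (h : a.val + 1 < n) : (a + 1).val = a.val + 1 := by
  rw [Fin.add_def, val_one hn]
  exact Nat.mod_eq_of_lt h

lemma cast_nsub2_add_one (hn : 3 ≤ n) : (((n - 2 : ℕ) : Fin n)) + 1 = -1 := by
  apply Fin.val_injective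
  rw [val_add_one hn _ (by rw [val_cast_lt _ (by omega)]; omega), val_cast_lt _ (by omega),
    val_neg_one hn]
  omega


variable {M : DFA (Fin 2) (Fin n)}

/-- the action of letter `0` on states -/
noncomputable def astep (x : Fin n) : Fin n := if x = 1 then 0 else x

/-- reachability in the profile automaton -/
def Reach (M : DFA (Fin 2) (Fin n)) (p : Fin n × Finset (Fin n)) : Prop :=
  ∃ w : List (Fin 2), prof M w = p

lemma reach_step {p : Fin n × Finset (Fin n)} (h : Reach M p) (c : Fin 2) :
    Reach M (stepP M p c) := by
  obtain ⟨w, rfl⟩ := h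
  exact ⟨w ++ [c], by rw [prof_append]; rfl⟩

section StepLemmas
variable (hn : 3 ≤ n)
  (hs0 : ∀ i : Fin n, M.step i 0 = if i = 1 then 0 else i)
  (hs1 : ∀ i : Fin n, M.step i 1 = i + 1)
  (hst : M.start = 0)
  (hacc : ∀ i : Fin n, i ∈ M.accept ↔ i = -1)

include hs1 hst hacc in
lemma stepP_one (i : Fin n) (S : Finset (Fin n)) :
    stepP M (i, S) 1 = (i + 1, S.image (· + 1) ∪ if i + 1 = -1 then {(0 : Fin n)} else ∅) := by
  simp only [stepP, hs1, hst, hacc]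

include hs0 hst hacc in
lemma stepP_zero (i : Fin n) (S : Finset (Fin n)) :
    stepP M (i, S) 0 =
      (astep i, S.image astep ∪ if astep i = -1 then {(0 : Fin n)} else ∅) := by
  simp only [stepP, hs0, hst, hacc]
  rfl

include hs1 hst hacc in
lemma reach_b_nowrap {i : Fin n} {S : Finset (Fin n)} (h : i + 1 ≠ -1)
    (hr : Reach M (i, S)) : Reach M (i + 1, S.image (· + 1)) := by
  have := reach_step hr 1
  rwa [stepP_one hs1 hst hacc, if_neg h, Finset.union_empty] at this

include hs1 hst hacc in
lemma reach_b_wrap {i : Fin n} {S : Finset (Fin n)} (h : i + 1 = -1)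
    (hr : Reach M (i, S)) : Reach M (i + 1, S.image (· + 1) ∪ {(0 : Fin n)}) := by
  have := reach_step hr 1
  rwa [stepP_one hs1 hst hacc, if_pos h] at this

include hn hs0 hst hacc in
lemma reach_a {i : Fin n} {S : Finset (Fin n)} (h : i ≠ -1)
    (hr : Reach M (i, S)) : Reach M (astep i, S.image astep) := by
  have h2 : astep i ≠ -1 := by
    unfold astep
    split
    · exact fun hc => zero_ne_neg_one hn hc
    · exact h
  have := reach_step hr 0
  rwa [stepP_zero hs0 hst hacc, if_neg h2, Finset.union_empty] at this

include hn hs1 hst hacc in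
lemma reach_rot {S : Finset (Fin n)} (hr : Reach M (0, S)) :
    ∀ j : ℕ, j ≤ n - 2 → Reach M ((j : Fin n), S.image (· + (j : Fin n))) := by
  intro j
  induction j with
  | zero =>
    intro _
    simpa using hr
  | succ j ih =>
    intro hj
    have hr' := ih (by omega)
    have hne : ((j : ℕ) : Fin n) + 1 ≠ -1 := by
      intro hc
      have := congrArg Fin.val hc
      rw [val_add_one hn _ (by rw [val_cast_lt _ (by omega)]; omega),
        val_cast_lt _ (by omega), val_neg_one hn] at this
      omega
    have := reach_b_nowrap hs1 hst hacc hne hr'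
    have hcast : ((j : ℕ) : Fin n) + 1 = (((j + 1 : ℕ)) : Fin n) := by push_cast; ring
    have hset : (S.image (· + ((j : ℕ) : Fin n))).image (· + 1)
        = S.image (· + (((j + 1 : ℕ)) : Fin n)) := by
      rw [Finset.image_image]
      apply Finset.image_congr
      intro x _
      show x + ((j : ℕ) : Fin n) + 1 = x + (((j + 1 : ℕ)) : Fin n)
      push_cast
      ring
    rwa [hcast, hset] at this

include hn hs1 hst hacc in
lemma reach_ins {S : Finset (Fin n)} (hr : Reach M (0, S)) :
    Reach M (0, insert (1 : Fin n) S) := by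
  have h1 := reach_rot hn hs1 hst hacc hr (n - 2) le_rfl
  have h2 := reach_b_wrap hs1 hst hacc (cast_nsub2_add_one hn) h1
  have h3 := reach_b_nowrap hs1 hst hacc (i := ((n - 2 : ℕ) : Fin n) + 1)
    (by rw [cast_nsub2_add_one hn, neg_add_cancel]; exact fun hc => (zero_ne_neg_one hn) hc) h2
  have hc0 : ((n - 2 : ℕ) : Fin n) + 1 + 1 = 0 := by
    rw [cast_nsub2_add_one hn, neg_add_cancel]
  rw [hc0] at h3
  have hset : ((S.image (· + ((n - 2 : ℕ) : Fin n))).image (· + 1) ∪ {(0 : Fin n)}).image (· + 1)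
      = insert (1 : Fin n) S := by
    rw [Finset.image_union, Finset.image_image, Finset.image_image]
    have e1 : Finset.image (((fun x => x + 1) ∘ fun x => x + 1) ∘ fun x => x + ((n - 2 : ℕ) : Fin n)) S = S := by
      have hxx : ∀ x ∈ S, ((((fun x => x + 1) ∘ fun x => x + 1) ∘ fun x => x + ((n - 2 : ℕ) : Fin n)) x) = id x := by
        intro x _
        show x + ((n - 2 : ℕ) : Fin n) + 1 + 1 = x
        calc x + ((n - 2 : ℕ) : Fin n) + 1 + 1 = x + (((n - 2 : ℕ) : Fin n) + 1 + 1) := by ring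
          _ = x := by rw [hc0, add_zero]
      calc Finset.image (((fun x => x + 1) ∘ fun x => x + 1) ∘ fun x => x + ((n - 2 : ℕ) : Fin n)) S
            = S.image id := Finset.image_congr hxx
        _ = S := Finset.image_id
    rw [e1, Finset.image_singleton, zero_add, Finset.insert_eq, Finset.union_comm]
  rwa [hset] at h3

include hn hs0 hs1 hst hacc in
lemma reach_m3 {S : Finset (Fin n)} (h0 : (0 : Fin n) ∉ S) (hr : Reach M (0, S)) :
    Reach M (0, S.image (· + 1)) := by
  have h1ne : (0 : Fin n) + 1 ≠ -1 := by
    rw [zero_add]; exact one_ne_neg_one hn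
  have h1 := reach_b_nowrap hs1 hst hacc h1ne hr
  rw [zero_add] at h1
  have h2 := reach_a hn hs0 hst hacc (one_ne_neg_one hn) h1
  have ha1 : astep (1 : Fin n) = 0 := if_pos rfl
  have hset : (S.image (· + 1)).image astep = S.image (· + 1) := by
    have hcg : ∀ x ∈ S.image (· + 1), astep x = id x := by
      intro x hx
      rcases Finset.mem_image.1 hx with ⟨s, hs, rfl⟩
      show astep (s + 1) = s + 1
      unfold astep
      rw [if_neg]
      intro hc
      have hc' : s + 1 = 0 + 1 := by rw [hc, zero_add]
      exact h0 ((add_right_cancel hc') ▸ hs)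
    calc (S.image (· + 1)).image astep = (S.image (· + 1)).image id := Finset.image_congr hcg
      _ = _ := Finset.image_id
  rwa [ha1, hset] at h2

include hn hs0 hs1 hst hacc in
lemma reach_m3_iter {S : Finset (Fin n)} (m : ℕ)
    (h : ∀ t : ℕ, t < m → (0 : Fin n) ∉ S.image (· + (t : Fin n)))
    (hr : Reach M (0, S)) : Reach M (0, S.image (· + (m : Fin n))) := by
  induction m with
  | zero => simpa using hr
  | succ m ih =>
    have h1 := ih (fun t ht => h t (by omega))
    have h2 := reach_m3 hn hs0 hs1 hst hacc (h m (by omega)) h1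
    have hset : (S.image (· + (m : Fin n))).image (· + 1)
        = S.image (· + (((m + 1 : ℕ)) : Fin n)) := by
      rw [Finset.image_image]
      apply Finset.image_congr
      intro x _
      show x + (m : Fin n) + 1 = x + (((m + 1 : ℕ)) : Fin n)
      push_cast
      ring
    rwa [hset] at h2

include hn hs0 hs1 hst hacc in
lemma reach_shift1 (R : Finset (Fin n)) : Reach M (0, R.image (· + 1)) := by
  suffices H : ∀ k, ∀ R : Finset (Fin n), R.card = k → Reach M (0, R.image (· + 1)) from
    H R.card R rfl
  intro k
  induction k using Nat.strong_induction_on with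
  | _ k ih =>
    intro R hk
    rcases R.eq_empty_or_nonempty with rfl | hne
    · exact ⟨[], by simp [prof, hst]⟩
    · set r1 := R.min' hne with hr1
      set R2 := (R.erase r1).image (fun x => x - r1) with hR2
      have hcard : R2.card < k := by
        rw [hR2, Finset.card_image_of_injective _ sub_left_injective,
          Finset.card_erase_of_mem (R.min'_mem hne)]
        have := Finset.card_pos.2 hne
        omega
      have hbase := ih R2.card hcard R2 rfl
      have hins := reach_ins hn hs1 hst hacc hbase
      have hr1lt : r1.val < n := r1.isLt
      have hcond : ∀ t : ℕ, t < r1.val →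
          (0 : Fin n) ∉ (insert (1 : Fin n) (R2.image (· + 1))).image (· + (t : Fin n)) := by
        intro t ht hmem
        rcases Finset.mem_image.1 hmem with ⟨x, hx, hx0⟩
        rcases Finset.mem_insert.1 hx with rfl | hx2
        · -- 1 + t = 0 impossible
          have := congrArg Fin.val hx0
          rw [val_add_cast _ t (by rw [val_one hn]; omega), val_one hn, Fin.val_zero] at this
          omega
        · rcases Finset.mem_image.1 hx2 with ⟨x2, hx3, rfl⟩
          rcases Finset.mem_image.1 hx3 with ⟨y, hy, rfl⟩
          -- (y - r1) + 1 + t = 0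
          have hkey : r1 - ((t + 1 : ℕ) : Fin n) = y := by
            push_cast
            linear_combination -hx0
          have hval := congrArg Fin.val hkey
          rw [val_sub_cast _ _ (by omega)] at hval
          have hle : r1.val ≤ y.val := R.min'_le y (Finset.mem_of_mem_erase hy)
          have hyne : y ≠ r1 := Finset.ne_of_mem_erase hy
          have : y.val ≠ r1.val := fun hc => hyne (Fin.val_injective hc)
          omega
      have hiter := reach_m3_iter hn hs0 hs1 hst hacc r1.val hcond hins
      have hset : (insert (1 : Fin n) (R2.image (· + 1))).image (· + ((r1.val : ℕ) : Fin n))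
          = R.image (· + 1) := by
        rw [Fin.cast_val_eq_self, Finset.image_insert, hR2, Finset.image_image,
          Finset.image_image]
        have hfun : ∀ x ∈ R.erase r1,
            (((fun x => x + r1) ∘ fun x => x + 1) ∘ fun x => x - r1) x = x + 1 := by
          intro x _
          show x - r1 + 1 + r1 = x + 1
          ring
        rw [Finset.image_congr hfun]
        conv_rhs => rw [← Finset.insert_erase (R.min'_mem hne)]
        rw [Finset.image_insert, add_comm]
      rwa [hset] at hiter

include hn hs0 hs1 hst hacc in
lemma reach_all (i : Fin n) (S : Finset (Fin n)) (hval : i = -1 → (0 : Fin n) ∈ S) :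
    Reach M (i, S) := by
  by_cases hi : i = -1
  · subst hi
    have h0S := hval rfl
    have h1 := reach_shift1 hn hs0 hs1 hst hacc S
    have h2 := reach_rot hn hs1 hst hacc h1 (n - 2) le_rfl
    have h3 := reach_b_wrap hs1 hst hacc (cast_nsub2_add_one hn) h2
    rw [cast_nsub2_add_one hn] at h3
    have hc0 : ((n - 2 : ℕ) : Fin n) + 1 + 1 = 0 := by
      rw [cast_nsub2_add_one hn, neg_add_cancel]
    have hset : ((S.image (· + 1)).image (· + ((n - 2 : ℕ) : Fin n))).image (· + 1)
        ∪ {(0 : Fin n)} = S := by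
      rw [Finset.image_image, Finset.image_image]
      have hfun : ∀ x ∈ S,
          (((fun x => x + 1) ∘ fun x => x + ((n - 2 : ℕ) : Fin n)) ∘ fun x => x + 1) x = id x := by
        intro x _
        show x + 1 + ((n - 2 : ℕ) : Fin n) + 1 = x
        calc x + 1 + ((n - 2 : ℕ) : Fin n) + 1 = x + (((n - 2 : ℕ) : Fin n) + 1 + 1) := by ring
          _ = x := by rw [hc0, add_zero]
      rw [Finset.image_congr hfun, Finset.image_id]
      exact Finset.union_eq_left.2 (Finset.singleton_subset_iff.2 h0S)
    rwa [hset] at h3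
  · have hilt : i.val ≤ n - 2 := by
      have h1 := i.isLt
      have hne : i.val ≠ n - 1 := fun hc => hi (Fin.val_injective (by rw [hc, val_neg_one hn]))
      omega
    have h1 := reach_shift1 hn hs0 hs1 hst hacc (S.image (fun x => x - (1 + i)))
    have h2 := reach_rot hn hs1 hst hacc h1 i.val hilt
    rw [Fin.cast_val_eq_self] at h2
    have hset : ((S.image (fun x => x - (1 + i))).image (· + 1)).image (· + i) = S := by
      rw [Finset.image_image, Finset.image_image]
      have hfun : ∀ x ∈ S,
          (((fun x => x + i) ∘ fun x => x + 1) ∘ fun x => x - (1 + i)) x = id x := by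
        intro x _
        show x - (1 + i) + 1 + i = x
        ring
      rw [Finset.image_congr hfun, Finset.image_id]
    rwa [hset] at h2

lemma astep_ne_one (hn : 3 ≤ n) (x : Fin n) : astep x ≠ 1 := by
  unfold astep
  split
  · intro hc
    have := congrArg Fin.val hc
    rw [Fin.val_zero, val_one hn] at this
    omega
  · assumption

lemma astep_eq_zero_iff (x : Fin n) : astep x = 0 ↔ (x = 0 ∨ x = 1) := by
  unfold astep
  split
  · simp [*]
  · constructor
    · exact fun h => Or.inl h
    · rintro (h | h)
      · exact h
      · exact absurd h (by assumption)

lemma cast_n_sub_one (hn : 3 ≤ n) : ((n - 1 : ℕ) : Fin n) = -1 := by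
  apply Fin.val_injective
  rw [val_cast_lt _ (by omega), val_neg_one hn]

lemma cast_two_n_sub_two (hn : 3 ≤ n) : ((2 * n - 2 : ℕ) : Fin n) = -1 + -1 := by
  apply Fin.val_injective
  rw [Fin.val_natCast, Fin.add_def, val_neg_one hn]
  have h1 : (2 * n - 2) = n + (n - 2) := by omega
  have h2 : n - 1 + (n - 1) = n + (n - 2) := by omega
  rw [h1, h2]

include hs1 in
lemma eval_rep (q : Fin n) (m : ℕ) :
    M.evalFrom q (List.replicate m 1) = q + (m : Fin n) := by
  induction m generalizing q with
  | zero => simp [DFA.evalFrom]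
  | succ m ih =>
    rw [List.replicate_succ]
    show M.evalFrom (M.step q 1) (List.replicate m 1) = _
    rw [ih, hs1]
    push_cast
    ring

include hs0 hs1 in
lemma eval_zC (q : Fin n) (k m : ℕ) :
    M.evalFrom q (List.replicate k 1 ++ [0] ++ List.replicate m 1)
      = astep (q + (k : Fin n)) + (m : Fin n) := by
  rw [DFA.evalFrom_of_append, DFA.evalFrom_of_append]
  rw [show M.evalFrom q (List.replicate k 1) = q + (k : Fin n) from eval_rep hs1 q k]
  rw [show M.evalFrom (M.evalFrom (q + (k : Fin n)) [0]) (List.replicate m 1)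
      = M.evalFrom (q + (k : Fin n)) [0] + (m : Fin n) from eval_rep hs1 _ m]
  rw [show M.evalFrom (q + (k : Fin n)) [0] = M.step (q + (k : Fin n)) 0 from rfl, hs0]
  rfl

include hst hacc in
lemma mem_accepts_iff (w : List (Fin 2)) : w ∈ M.accepts ↔ M.evalFrom 0 w = -1 := by
  rw [DFA.mem_accepts]
  show M.evalFrom M.start w ∈ M.accept ↔ _
  rw [hst, hacc]

lemma split_replicate {z1 z2 : List (Fin 2)} {m : ℕ}
    (h : z1 ++ z2 = List.replicate m 1) :
    z1 = List.replicate z1.length 1 ∧ z2 = List.replicate z2.length 1 ∧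
      z1.length + z2.length = m := by
  have hmem : ∀ b ∈ z1 ++ z2, b = 1 := by
    rw [h]; exact fun b hb => List.eq_of_mem_replicate hb
  refine ⟨List.eq_replicate_of_mem (fun b hb => hmem b (List.mem_append_left _ hb)),
    List.eq_replicate_of_mem (fun b hb => hmem b (List.mem_append_right _ hb)), ?_⟩
  have := congrArg List.length h
  simpa using this

lemma split_zC {z1 z2 : List (Fin 2)} {k m : ℕ}
    (h : z1 ++ z2 = List.replicate k 1 ++ [0] ++ List.replicate m 1) :
    (∃ p, p ≤ k ∧ z1 = List.replicate p 1 ∧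
        z2 = List.replicate (k - p) 1 ++ [0] ++ List.replicate m 1) ∨
    (∃ p, p ≤ m ∧ z1 = List.replicate k 1 ++ [0] ++ List.replicate p 1 ∧
        z2 = List.replicate (m - p) 1) := by
  rw [List.append_assoc] at h
  rcases List.append_eq_append_iff.1 h with ⟨a', h1, h2⟩ | ⟨c', h1, h2⟩
  · -- h1 : replicate k 1 = z1 ++ a', h2 : z2 = a' ++ ([0] ++ replicate m 1)
    left
    obtain ⟨e1, e2, e3⟩ := split_replicate h1.symm
    refine ⟨z1.length, by omega, e1, ?_⟩
    rw [h2, e2, ← List.append_assoc]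
    have : a'.length = k - z1.length := by omega
    rw [this]
  · -- h1 : z1 = replicate k 1 ++ c', h2 : [0] ++ replicate m 1 = c' ++ z2
    cases c' with
    | nil =>
      left
      refine ⟨k, le_rfl, by simpa using h1, ?_⟩
      rw [Nat.sub_self]
      simpa using h2.symm
    | cons c0 c'' =>
      have hc0 : c0 = 0 ∧ List.replicate m 1 = c'' ++ z2 := by
        constructor
        · exact (List.cons.injEq _ _ _ _ ▸ h2).1.symm ▸ rfl
        · exact (List.cons.injEq _ _ _ _ ▸ h2).2
      obtain ⟨rfl, h3⟩ := hc0
      obtain ⟨e1, e2, e3⟩ := split_replicate h3.symm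
      right
      refine ⟨c''.length, by omega, ?_, ?_⟩
      · rw [h1]
        conv_lhs => rw [e1]
        simp [List.append_assoc]
      rw [e2]
      have : z2.length = m - c''.length := by omega
      rw [this]

include hn hs0 hs1 hst hacc in
lemma disting_fst {i j : Fin n} (hij : j ≠ i) (hij2 : j ≠ i - 1) (S T : Finset (Fin n)) :
    ∃ z, Fpred M (i, S) z ∧ ¬ Fpred M (j, T) z := by
  classical
  set k := ((1 : Fin n) - i).val with hk
  have hkcast : ((k : ℕ) : Fin n) = 1 - i := Fin.cast_val_eq_self _
  refine ⟨List.replicate k 1 ++ [0] ++ List.replicate (2 * n - 2) 1, ?_, ?_⟩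
  · left
    refine ⟨List.replicate k 1 ++ [0] ++ List.replicate (n - 1) 1,
      List.replicate (n - 1) 1, ?_, ?_, ?_⟩
    · have h1 : 2 * n - 2 = (n - 1) + (n - 1) := by omega
      rw [h1, List.replicate_add]
      simp [List.append_assoc]
    · show M.evalFrom (i, S).1 _ ∈ M.accept
      rw [eval_zC hs0 hs1, hacc]
      show astep (i + ((k : ℕ) : Fin n)) + ((n - 1 : ℕ) : Fin n) = -1
      rw [hkcast, cast_n_sub_one hn]
      have : i + (1 - i) = 1 := by ring
      rw [this]
      have ha1 : astep (1 : Fin n) = 0 := if_pos rfl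
      rw [ha1, zero_add]
    · rw [mem_accepts_iff hst hacc, eval_rep hs1, cast_n_sub_one hn, zero_add]
  · rintro (⟨z1, z2, hz, h1, h2⟩ | ⟨q, hq, h3⟩)
    · rcases split_zC hz.symm with ⟨p, hp, he1, he2⟩ | ⟨p, hp, he1, he2⟩
      · rw [mem_accepts_iff hst hacc, he2, eval_zC hs0 hs1, zero_add] at h2
        -- astep _ + ↑(2n-2) = -1  ⇒ astep _ = 1, contradiction
        have : astep (((k - p : ℕ)) : Fin n) = 1 := by
          rw [cast_two_n_sub_two hn] at h2
          linear_combination h2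
        exact astep_ne_one hn _ this
      · -- z1 = rep k ++ [0] ++ rep p, z2 = rep (2n-2-p)
        rw [mem_accepts_iff hst hacc, he2, eval_rep hs1, zero_add] at h2
        have hp' : 2 * n - 2 - p = n - 1 := by
          have hval := congrArg Fin.val h2
          rw [Fin.val_natCast, val_neg_one hn] at hval
          rcases Nat.lt_or_ge (2 * n - 2 - p) n with hlt | hge
          · rw [Nat.mod_eq_of_lt hlt] at hval; omega
          · rw [Nat.mod_eq_sub_mod hge,
              Nat.mod_eq_of_lt (by omega : 2 * n - 2 - p - n < n)] at hval
            omega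
        have hpn : p = n - 1 := by omega
        rw [he1] at h1
        show False
        have h1' : astep (j + ((k : ℕ) : Fin n)) + ((p : ℕ) : Fin n) = -1 := by
          have := h1
          rw [show ((j, T).1) = j from rfl] at this
          rw [eval_zC hs0 hs1, hacc] at this
          exact this
        rw [hpn, cast_n_sub_one hn] at h1'
        have h0 : astep (j + ((k : ℕ) : Fin n)) = 0 := by linear_combination h1'
        rcases (astep_eq_zero_iff _).1 h0 with hc | hc
        · rw [hkcast] at hc
          exact hij2 (by linear_combination hc)
        · rw [hkcast] at hc
          exact hij (by linear_combination hc)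
    · -- second term: astep (q + k) + ↑(2n-2) = -1 impossible
      rw [show ((j, T).2) = T from rfl] at hq
      rw [show M.evalFrom q _ ∈ M.accept ↔ _ from hacc _, eval_zC hs0 hs1,
        cast_two_n_sub_two hn] at h3
      exact astep_ne_one hn _ (by linear_combination h3)

include hn hs1 hst hacc in
lemma disting_snd {i : Fin n} {S T : Finset (Fin n)} {q : Fin n} (hqS : q ∈ S) (hqT : q ∉ T)
    (hvalT : i = -1 → (0 : Fin n) ∈ T) :
    ∃ z, Fpred M (i, S) z ∧ ¬ Fpred M (i, T) z := by
  set m := ((-1 : Fin n) - q).val with hm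
  have hmcast : ((m : ℕ) : Fin n) = -1 - q := Fin.cast_val_eq_self _
  refine ⟨List.replicate m 1, Or.inr ⟨q, hqS, ?_⟩, ?_⟩
  · rw [show M.evalFrom q _ ∈ M.accept ↔ _ from hacc _, eval_rep hs1, hmcast]
    ring
  · rintro (⟨z1, z2, hz, h1, h2⟩ | ⟨q', hq', h3⟩)
    · obtain ⟨e1, e2, e3⟩ := split_replicate hz.symm
      rw [mem_accepts_iff hst hacc, e2, eval_rep hs1, zero_add] at h2
      have hmlt : m < n := ((-1 : Fin n) - q).isLt
      have hlen : z2.length = n - 1 := by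
        have hval := congrArg Fin.val h2
        rw [Fin.val_natCast, val_neg_one hn, Nat.mod_eq_of_lt (by omega)] at hval
        exact hval
      have hz1 : z1.length = 0 := by omega
      have hmn : m = n - 1 := by omega
      have hq0 : q = 0 := by
        have : ((-1 : Fin n) - q) = -1 := by
          apply Fin.val_injective
          rw [← hm, hmn, val_neg_one hn]
        linear_combination -this
      have hi : i = -1 := by
        rw [List.length_eq_zero_iff.1 hz1] at h1
        have : M.evalFrom i [] = i := rfl
        rw [show ((i, S).1) = i from rfl] at h1
        rw [this] at h1
        exact (hacc i).1 h1
      exact hqT (hq0 ▸ hvalT hi)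
    · rw [show ((i, T).2) = T from rfl] at hq'
      rw [show M.evalFrom q' _ ∈ M.accept ↔ _ from hacc _, eval_rep hs1, hmcast] at h3
      have : q' = q := by linear_combination h3
      exact hqT (this ▸ hq')

end StepLemmas

section Counting
variable (hn : 3 ≤ n)

/-- the "bad" pairs correspond to finsets not containing `0` -/
noncomputable def badEquiv :
    {p : Fin n × Finset (Fin n) // ¬(p.1 = -1 → (0 : Fin n) ∈ p.2)}
      ≃ {S : Finset (Fin n) // (0 : Fin n) ∉ S} where
  toFun p := ⟨p.1.2, (_root_.not_imp.1 p.2).2⟩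
  invFun S := ⟨(-1, S.1), _root_.not_imp.2 ⟨rfl, S.2⟩⟩
  left_inv p := by
    apply Subtype.ext
    have h1 : p.1.1 = -1 := (_root_.not_imp.1 p.2).1
    exact Prod.ext h1.symm rfl
  right_inv S := rfl

noncomputable def swapEquiv :
    {S : Finset (Fin n) // (0 : Fin n) ∈ S} ≃ {S : Finset (Fin n) // (0 : Fin n) ∉ S} where
  toFun S := ⟨S.1.erase 0, Finset.notMem_erase _ _⟩
  invFun S := ⟨insert 0 S.1, Finset.mem_insert_self _ _⟩
  left_inv S := Subtype.ext (Finset.insert_erase S.2)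
  right_inv S := Subtype.ext (Finset.erase_insert S.2)

include hn in
lemma card_not_mem_zero :
    Fintype.card {S : Finset (Fin n) // (0 : Fin n) ∉ S} = 2 ^ (n - 1) := by
  classical
  have h1 : Fintype.card {S : Finset (Fin n) // ¬ (0 : Fin n) ∈ S}
      = Fintype.card (Finset (Fin n)) - Fintype.card {S : Finset (Fin n) // (0 : Fin n) ∈ S} :=
    Fintype.card_subtype_compl _
  have h2 : Fintype.card {S : Finset (Fin n) // (0 : Fin n) ∈ S}
      = Fintype.card {S : Finset (Fin n) // (0 : Fin n) ∉ S} :=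
    Fintype.card_congr swapEquiv
  have h3 : Fintype.card (Finset (Fin n)) = 2 ^ n := by
    rw [Fintype.card_finset, Fintype.card_fin]
  have h4 : Fintype.card {S : Finset (Fin n) // (0 : Fin n) ∈ S} ≤ Fintype.card (Finset (Fin n)) :=
    Fintype.card_subtype_le _
  have h5 : 2 ^ n = 2 ^ (n - 1) * 2 := by
    conv_lhs => rw [show n = (n - 1) + 1 from by omega, pow_succ]
  have hcc : Fintype.card {S : Finset (Fin n) // ¬ (0 : Fin n) ∈ S}
      = Fintype.card {S : Finset (Fin n) // (0 : Fin n) ∉ S} := rfl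
  omega

include hn in
lemma card_valid :
    Fintype.card {p : Fin n × Finset (Fin n) // p.1 = -1 → (0 : Fin n) ∈ p.2}
      = n * 2 ^ n - 2 ^ (n - 1) := by
  classical
  have h1 : Fintype.card {p : Fin n × Finset (Fin n) // ¬(p.1 = -1 → (0 : Fin n) ∈ p.2)}
      = Fintype.card (Fin n × Finset (Fin n))
        - Fintype.card {p : Fin n × Finset (Fin n) // p.1 = -1 → (0 : Fin n) ∈ p.2} :=
    Fintype.card_subtype_compl _
  have h2 : Fintype.card {p : Fin n × Finset (Fin n) // ¬(p.1 = -1 → (0 : Fin n) ∈ p.2)}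
      = 2 ^ (n - 1) := by
    rw [Fintype.card_congr badEquiv]
    exact card_not_mem_zero hn
  have h3 : Fintype.card (Fin n × Finset (Fin n)) = n * 2 ^ n := by
    simp [Fintype.card_finset]
  have h4 : Fintype.card {p : Fin n × Finset (Fin n) // p.1 = -1 → (0 : Fin n) ∈ p.2}
      ≤ Fintype.card (Fin n × Finset (Fin n)) := Fintype.card_subtype_le _
  have h5 : 2 ^ (n - 1) ≤ 2 ^ n := Nat.pow_le_pow_right (by omega) (by omega)
  have h6 : 2 ^ n ≤ n * 2 ^ n := Nat.le_mul_of_pos_left _ (by omega)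
  omega

end Counting

lemma one_add_one_ne_zero' (hn : 3 ≤ n) : (1 : Fin n) + 1 ≠ 0 := by
  intro hc
  have h1 : ((1 : Fin n) + 1).val = 2 := by
    rw [Fin.add_def]
    show ((1 : Fin n).val + (1 : Fin n).val) % n = 2
    rw [val_one hn]
    exact Nat.mod_eq_of_lt (by omega)
  rw [hc, Fin.val_zero] at h1
  omega

end Spec
end WSLB

/-- Fix `n ≥ 3` and let `M` be the DFA over `{0,1}` (here `Fin 2`) with states
`{0,…,n-1}` (here `Fin n`), start state `0`, final states `{n-1}`, and transitions
`δ(1,0) = 0`, `δ(i,0) = i` for `i ≠ 1`, and `δ(i,1) = (i+1) mod n`. Then every DFA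
accepting `L(M) * L(M)` has at least `n * 2^n - 2^(n-1)` states. -/
theorem witness_square_lower_bound (n : ℕ) (hn : 3 ≤ n) (M : DFA (Fin 2) (Fin n))
    (hstep0 : ∀ i : Fin n, ((M.step i 0 : Fin n) : ℕ) = if (i : ℕ) = 1 then 0 else (i : ℕ))
    (hstep1 : ∀ i : Fin n, ((M.step i 1 : Fin n) : ℕ) = ((i : ℕ) + 1) % n)
    (hstart : ((M.start : Fin n) : ℕ) = 0)
    (haccept : M.accept = {i : Fin n | (i : ℕ) = n - 1}) :
    ∀ (τ : Type) [Fintype τ] (N : DFA (Fin 2) τ),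
      N.accepts = M.accepts * M.accepts →
      n * 2 ^ n - 2 ^ (n - 1) ≤ Fintype.card τ := by
  intro τ _ N hN
  classical
  haveI : NeZero n := ⟨by omega⟩
  -- translate the hypotheses to `Fin n` equalities
  have hs1 : ∀ i : Fin n, M.step i 1 = i + 1 := by
    intro i
    apply Fin.val_injective
    rw [hstep1 i, Fin.add_def]
    show _ = (i.val + (1 : Fin n).val) % n
    rw [WSLB.val_one hn]
  have hs0 : ∀ i : Fin n, M.step i 0 = if i = 1 then 0 else i := by
    intro i
    apply Fin.val_injective
    rw [hstep0 i]
    by_cases h : i = (1 : Fin n)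
    · rw [if_pos h, if_pos (by rw [h, WSLB.val_one hn]), Fin.val_zero]
    · rw [if_neg h, if_neg (fun hc : i.val = 1 => h (Fin.val_injective (by rw [hc, WSLB.val_one hn])))]
  have hst : M.start = 0 := Fin.val_injective (by rw [hstart, Fin.val_zero])
  have hacc : ∀ i : Fin n, i ∈ M.accept ↔ i = -1 := by
    intro i
    rw [haccept]
    show (i : ℕ) = n - 1 ↔ _
    constructor
    · intro h
      exact Fin.val_injective (by rw [h, WSLB.val_neg_one hn])
    · intro h
      rw [h, WSLB.val_neg_one hn]
  have hε : M.start ∉ M.accept := by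
    rw [hst, hacc]
    exact WSLB.zero_ne_neg_one hn
  -- the valid profiles
  have hreach : ∀ p : {p : Fin n × Finset (Fin n) // p.1 = -1 → (0 : Fin n) ∈ p.2},
      ∃ w : List (Fin 2), WSLB.prof M w = p.1 :=
    fun p => WSLB.reach_all hn hs0 hs1 hst hacc p.1.1 p.1.2 p.2
  choose wrd hw using hreach
  have hinj : Function.Injective
      (fun p : {p : Fin n × Finset (Fin n) // p.1 = -1 → (0 : Fin n) ∈ p.2} =>
        N.eval (wrd p)) := by
    intro p p' heq
    simp only at heq
    have hres : ∀ z, WSLB.Fpred M p.1 z ↔ WSLB.Fpred M p'.1 z := by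
      intro z
      rw [← hw p, ← hw p', ← WSLB.mem_mul_iff_Fpred M hε, ← WSLB.mem_mul_iff_Fpred M hε, ← hN,
        DFA.mem_accepts, DFA.mem_accepts]
      have h1 : N.eval (wrd p ++ z) = N.evalFrom (N.eval (wrd p)) z :=
        DFA.evalFrom_of_append N N.start (wrd p) z
      have h2 : N.eval (wrd p' ++ z) = N.evalFrom (N.eval (wrd p')) z :=
        DFA.evalFrom_of_append N N.start (wrd p') z
      rw [h1, h2, heq]
    obtain ⟨⟨i, S⟩, hv⟩ := p
    obtain ⟨⟨j, T⟩, hv'⟩ := p'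
    simp only at hres hv hv'
    have hij : i = j := by
      by_contra hijne
      by_cases hji2 : j = i - 1
      · -- use swapped orientation: need i ≠ j and i ≠ j - 1
        have hij2 : i ≠ j - 1 := by
          intro hc
          apply WSLB.one_add_one_ne_zero' hn
          rw [hji2] at hc
          open scoped Fin.CommRing in linear_combination hc
        obtain ⟨z, hT, hS⟩ := WSLB.disting_fst hn hs0 hs1 hst hacc
          (i := j) (j := i) hijne hij2 T S
        exact hS ((hres z).2 hT)
      · obtain ⟨z, hS, hT⟩ := WSLB.disting_fst hn hs0 hs1 hst hacc
          (i := i) (j := j) (fun hc => hijne hc.symm) hji2 S T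
        exact hT ((hres z).1 hS)
    subst hij
    have hST : S = T := by
      apply Finset.ext
      intro q
      constructor
      · intro hqS
        by_contra hqT
        obtain ⟨z, h1, h2⟩ := WSLB.disting_snd hn hs1 hst hacc hqS hqT hv'
        exact h2 ((hres z).1 h1)
      · intro hqT
        by_contra hqS
        obtain ⟨z, h1, h2⟩ := WSLB.disting_snd hn hs1 hst hacc hqT hqS hv
        exact h2 ((hres z).2 h1)
    apply Subtype.ext
    exact Prod.ext rfl hST
  calc n * 2 ^ n - 2 ^ (n - 1)
      = Fintype.card {p : Fin n × Finset (Fin n) // p.1 = -1 → (0 : Fin n) ∈ p.2} :=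
        (WSLB.card_valid hn).symm
    _ ≤ Fintype.card τ := Fintype.card_le_of_injective _ hinj
end

section
/- Let M be a DFA with n states over an arbitrary finite alphabet and let L = L(M). Then there exists a DFA with at most n·2^n − 2^(n−1) states that accepts the language L·L. -/
open scoped Classical

section Aux

variable {α σ : Type} (M : DFA α σ)

/-- One step of the DFA for `L·L` on raw pairs. -/
noncomputable def rawStep (p : σ × Finset σ) (a : α) : σ × Finset σ :=
  (M.step p.1 a,
    p.2.image (fun t => M.step t a) ∪
      (if M.step p.1 a ∈ M.accept then {M.start} else ∅))

lemma rawStep_inv (p : σ × Finset σ) (a : α) :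
    (rawStep M p a).1 ∈ M.accept → M.start ∈ (rawStep M p a).2 := by
  intro hacc
  simp only [rawStep] at hacc ⊢
  simp [hacc]

/-- The DFA for `L·L`. -/
noncomputable def sqDFA : DFA α {p : σ × Finset σ // p.1 ∈ M.accept → M.start ∈ p.2} where
  step p a := ⟨rawStep M p.1 a, rawStep_inv M p.1 a⟩
  start := ⟨(M.start, if M.start ∈ M.accept then {M.start} else ∅), by
    intro h; simp [h]⟩
  accept := {p | ∃ s ∈ p.1.2, s ∈ M.accept}

lemma sqDFA_evalFrom_val (p) (w : List α) :
    ((sqDFA M).evalFrom p w).1 = w.foldl (rawStep M) p.1 := by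
  induction w generalizing p with
  | nil => rfl
  | cons a w ih =>
      rw [DFA.evalFrom, List.foldl_cons, List.foldl_cons, ← DFA.evalFrom, ih]
      rfl

lemma rawEval_fst (w : List α) : ∀ p : σ × Finset σ,
    (w.foldl (rawStep M) p).1 = M.evalFrom p.1 w := by
  induction w with
  | nil => intro p; rfl
  | cons a w ih =>
      intro p
      rw [List.foldl_cons, ih]
      rfl

lemma rawEval_snd (w : List α) : ∀ (q : σ) (S : Finset σ) (s : σ),
    (s ∈ (w.foldl (rawStep M) (q, S)).2 ↔
      (∃ t ∈ S, M.evalFrom t w = s) ∨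
        ∃ u v, w = u ++ v ∧ u ≠ [] ∧ M.evalFrom q u ∈ M.accept ∧
          M.evalFrom M.start v = s) := by
  induction w with
  | nil =>
      intro q S s
      constructor
      · intro h; exact Or.inl ⟨s, h, rfl⟩
      · rintro (⟨t, ht, rfl⟩ | ⟨u, v, huv, hu, _⟩)
        · exact ht
        · exact absurd (List.append_eq_nil_iff.mp huv.symm).1 hu
  | cons a w ih =>
      intro q S s
      rw [List.foldl_cons]
      show s ∈ (w.foldl (rawStep M) (rawStep M (q, S) a)).2 ↔ _
      have hr : rawStep M (q, S) a =
          (M.step q a, S.image (fun t => M.step t a) ∪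
            (if M.step q a ∈ M.accept then {M.start} else ∅)) := rfl
      rw [hr, ih]
      constructor
      · rintro (⟨t, ht, rfl⟩ | ⟨u, v, huv, hu, hacc, hv⟩)
        · rcases Finset.mem_union.mp ht with ht | ht
          · rcases Finset.mem_image.mp ht with ⟨t', ht', rfl⟩
            exact Or.inl ⟨t', ht', rfl⟩
          · by_cases hq : M.step q a ∈ M.accept
            · rw [if_pos hq] at ht
              rw [Finset.mem_singleton] at ht
              subst ht
              exact Or.inr ⟨[a], w, rfl, by simp, hq, rfl⟩
            · rw [if_neg hq] at ht
              exact absurd ht (Finset.notMem_empty _)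
        · refine Or.inr ⟨a :: u, v, by simp [huv], by simp, hacc, hv⟩
      · rintro (⟨t, ht, rfl⟩ | ⟨u, v, huv, hu, hacc, hv⟩)
        · refine Or.inl ⟨M.step t a, ?_, rfl⟩
          exact Finset.mem_union_left _ (Finset.mem_image.mpr ⟨t, ht, rfl⟩)
        · rcases u with _ | ⟨b, u⟩
          · exact absurd rfl hu
          · obtain ⟨hb, hw⟩ : a = b ∧ w = u ++ v := by
              simpa using huv
            subst hb
            rcases u with _ | ⟨c, u⟩
            · simp only [List.nil_append] at hw
              subst hw
              refine Or.inl ⟨M.start, ?_, hv⟩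
              have : M.evalFrom q [a] = M.step q a := rfl
              rw [this] at hacc
              exact Finset.mem_union_right _ (by rw [if_pos hacc]; simp)
            · refine Or.inr ⟨c :: u, v, hw, by simp, ?_, hv⟩
              exact hacc

lemma sqDFA_accepts : (sqDFA M).accepts = M.accepts * M.accepts := by
  ext w
  rw [DFA.mem_accepts, Language.mem_mul]
  have hval : ((sqDFA M).eval w).1 = w.foldl (rawStep M)
      (M.start, if M.start ∈ M.accept then {M.start} else ∅) :=
    sqDFA_evalFrom_val M _ w
  constructor
  · rintro ⟨s, hs, hsacc⟩
    rw [hval, rawEval_snd] at hs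
    rcases hs with ⟨t, ht, rfl⟩ | ⟨u, v, huv, _, hacc, hv⟩
    · by_cases hq : M.start ∈ M.accept
      · rw [if_pos hq, Finset.mem_singleton] at ht
        subst ht
        exact ⟨[], by rw [DFA.mem_accepts]; exact hq, w,
          by rw [DFA.mem_accepts]; exact hsacc, rfl⟩
      · rw [if_neg hq] at ht
        exact absurd ht (Finset.notMem_empty _)
    · refine ⟨u, ?_, v, ?_, huv.symm⟩
      · rw [DFA.mem_accepts]; exact hacc
      · rw [DFA.mem_accepts]
        show M.evalFrom M.start v ∈ M.accept
        rw [hv]; exact hsacc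
  · rintro ⟨u, hu, v, hv, rfl⟩
    rw [DFA.mem_accepts] at hu hv
    refine ⟨M.eval v, ?_, hv⟩
    rw [hval, rawEval_snd]
    rcases eq_or_ne u [] with rfl | hne
    · have hq : M.start ∈ M.accept := hu
      refine Or.inl ⟨M.start, by rw [if_pos hq]; simp, rfl⟩
    · exact Or.inr ⟨u, v, rfl, hne, hu, rfl⟩

end Aux

/-- Let `M` be a DFA with `n` states over an arbitrary finite alphabet and `L = L(M)`.
Then there exists a DFA with at most `n * 2^n - 2^(n-1)` states accepting `L * L`. -/
theorem square_state_complexity_upper_bound (α : Type) [Fintype α]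
    (σ : Type) [Fintype σ] (M : DFA α σ) (n : ℕ) (hn : Fintype.card σ = n) :
    ∃ (τ : Type) (_ : Fintype τ) (N : DFA α τ),
      N.accepts = M.accepts * M.accepts ∧
      Fintype.card τ ≤ n * 2 ^ n - 2 ^ (n - 1) := by
  have hn1 : 1 ≤ n := by
    rw [← hn]
    exact Fintype.card_pos_iff.mpr ⟨M.start⟩
  by_cases hF : M.accept.Nonempty
  · obtain ⟨qa, hqa⟩ := hF
    refine ⟨{p : σ × Finset σ // p.1 ∈ M.accept → M.start ∈ p.2}, inferInstance,
      sqDFA M, sqDFA_accepts M, ?_⟩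
    -- counting
    classical
    have hcard : Fintype.card {p : σ × Finset σ // p.1 ∈ M.accept → M.start ∈ p.2}
        = (Finset.univ.filter (fun p : σ × Finset σ => p.1 ∈ M.accept → M.start ∈ p.2)).card :=
      Fintype.card_subtype _
    have htotal : Fintype.card (σ × Finset σ) = n * 2 ^ n := by
      simp [Fintype.card_prod, hn]
    -- the bad set
    set bad := ((Finset.univ.erase M.start).powerset).image (fun S => (qa, S)) with hbad
    have hbadcard : bad.card = 2 ^ (n - 1) := by
      rw [hbad, Finset.card_image_of_injective _ (fun S T h => by simpa using h),
        Finset.card_powerset, Finset.card_erase_of_mem (Finset.mem_univ _),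
        Finset.card_univ, hn]
    have hdisj : ∀ p ∈ bad, ¬ (p.1 ∈ M.accept → M.start ∈ p.2) := by
      intro p hp
      rw [hbad, Finset.mem_image] at hp
      obtain ⟨S, hS, rfl⟩ := hp
      intro h
      have := h hqa
      have := Finset.mem_powerset.mp hS this
      simp at this
    have hsub : bad ⊆ Finset.univ.filter
        (fun p : σ × Finset σ => ¬ (p.1 ∈ M.accept → M.start ∈ p.2)) := by
      intro p hp
      exact Finset.mem_filter.mpr ⟨Finset.mem_univ _, hdisj p hp⟩
    have hsplit : (Finset.univ.filter (fun p : σ × Finset σ => p.1 ∈ M.accept → M.start ∈ p.2)).card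
        + (Finset.univ.filter (fun p : σ × Finset σ => ¬ (p.1 ∈ M.accept → M.start ∈ p.2))).card
        = n * 2 ^ n := by
      rw [Finset.card_filter_add_card_filter_not, Finset.card_univ, htotal]
    have hge : 2 ^ (n - 1) ≤ (Finset.univ.filter
        (fun p : σ × Finset σ => ¬ (p.1 ∈ M.accept → M.start ∈ p.2))).card := by
      rw [← hbadcard]; exact Finset.card_le_card hsub
    rw [hcard]
    omega
  · -- no accept states: L = ∅, use M itself
    refine ⟨σ, inferInstance, M, ?_, ?_⟩
    · have h0 : M.accepts = 0 := by
        ext w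
        constructor
        · intro h; exact absurd ⟨_, (M.mem_accepts).mp h⟩ hF
        · intro h; exact absurd h (Language.notMem_zero w)
      rw [h0, mul_zero]
    · rw [hn]
      set k := 2 ^ (n - 1) with hk
      have h2 : 2 ^ n = 2 * 2 ^ (n - 1) := by
        rw [← pow_succ']
        congr 1
        omega
      have h3 : n * 2 ^ n = 2 * (n * k) := by rw [h2, hk]; ring
      have h1 : 1 ≤ k := Nat.one_le_two_pow
      have ha : n ≤ n * k := Nat.le_mul_of_pos_right n (by omega)
      have hb : k ≤ n * k := Nat.le_mul_of_pos_left k (by omega)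
      omega
end

section
/- Let L be a language over a one-letter (unary) alphabet accepted by a DFA with n states. Then for every integer k ≥ 2, there exists a DFA with at most k·n − k + 1 states accepting the language L^k (the k-fold concatenation of L with itself). -/
private def wrd (m : ℕ) : List (Fin 1) := List.replicate m 0

private lemma wrd_eq (w : List (Fin 1)) : w = wrd w.length :=
  List.eq_replicate_of_mem fun b _ => Subsingleton.elim b 0

private lemma wrd_length (m : ℕ) : (wrd m).length = m := List.length_replicate

private lemma wrd_add (a b : ℕ) : wrd (a + b) = wrd a ++ wrd b := List.replicate_add a b 0

/-- sumset characterization of membership in `L ^ k` for unary languages -/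
private lemma mem_pow_iff (L : Language (Fin 1)) (k m : ℕ) :
    wrd m ∈ L ^ k ↔ ∃ l : List ℕ, l.length = k ∧ l.sum = m ∧ ∀ x ∈ l, wrd x ∈ L := by
  induction k generalizing m with
  | zero =>
    simp only [pow_zero, Language.mem_one]
    constructor
    · intro h
      have : m = 0 := by
        have := congrArg List.length h
        simpa [wrd_length] using this
      exact ⟨[], rfl, by simp [this], by simp⟩
    · rintro ⟨l, hl, hs, -⟩
      have : l = [] := List.length_eq_zero_iff.mp hl
      subst this
      simp at hs
      simp [← hs, wrd]
  | succ k ih =>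
    rw [pow_succ, Language.mem_mul]
    constructor
    · rintro ⟨a, ha, b, hb, hab⟩
      rw [wrd_eq a] at ha
      rw [wrd_eq b] at hb
      obtain ⟨l, hl, hs, hmem⟩ := (ih a.length).1 ha
      refine ⟨l ++ [b.length], by simp [hl], ?_, ?_⟩
      · have hm : m = a.length + b.length := by
          have := congrArg List.length hab
          simpa [wrd_length] using this.symm
        simp [List.sum_append, hs, hm]
      · intro x hx
        rcases List.mem_append.mp hx with h | h
        · exact hmem x h
        · simp at h; subst h; exact hb
    · rintro ⟨l, hl, hs, hmem⟩
      rcases l with - | ⟨x, l'⟩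
      · simp at hl
      · -- l = x :: l', sum = x + l'.sum
        refine ⟨wrd l'.sum, ?_, wrd x, hmem x (by simp), ?_⟩
        · exact (ih l'.sum).2 ⟨l', by simpa using hl, rfl, fun y hy => hmem y (by simp [hy])⟩
        · rw [← wrd_add]
          congr 1
          simp at hs
          omega

private lemma step_pow (S : Set ℕ) (T p : ℕ)
    (hper : ∀ m, T ≤ m → (m ∈ S ↔ m + p ∈ S)) :
    ∀ c m, T ≤ m → (m ∈ S ↔ m + c * p ∈ S) := by
  intro c
  induction c with
  | zero => simp
  | succ c ih =>
    intro m hm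
    have h1 := ih m hm
    have h2 := hper (m + c * p) (le_trans hm (Nat.le_add_right _ _))
    rw [h1, h2]
    ring_nf

/-- key combinatorial lemma: periodicity of the k-fold sumset -/
private lemma sumset_periodic (L : Language (Fin 1)) (t p : ℕ) (hp : 1 ≤ p)
    (hper : ∀ m, t ≤ m → (wrd m ∈ L ↔ wrd (m + p) ∈ L)) (k : ℕ) (hk : 2 ≤ k) :
    ∀ m, k * t + (k - 1) * (p - 1) ≤ m → (wrd m ∈ L ^ k ↔ wrd (m + p) ∈ L ^ k) := by
  intro m hm
  constructor
  · intro h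
    obtain ⟨l, hl, hs, hmem⟩ := (mem_pow_iff L k m).1 h
    -- find an element ≥ t
    have hex : ∃ x ∈ l, t ≤ x := by
      by_contra hno
      push_neg at hno
      rcases l with - | ⟨x0, l'⟩
      · simp at hl; omega
      · have ht : 1 ≤ t := by have := hno x0 (by simp); omega
        have hb : x0 + l'.sum ≤ (x0 :: l').length • (t - 1) := by
          have := List.sum_le_card_nsmul (x0 :: l') (t - 1)
            (fun x hx => by have := hno x hx; omega)
          simpa using this
        have hlen : (x0 :: l').length = k := hl
        rw [hlen, smul_eq_mul] at hb
        have hkt : k * (t - 1) + k * 1 = k * t := by rw [← Nat.mul_add]; congr 1; omega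
        have hsum : l'.sum + x0 = m := by simp at hs; omega
        have hA : k * t ≤ m := le_trans (Nat.le_add_right _ _) hm
        omega
    obtain ⟨x, hxl, hxt⟩ := hex
    obtain ⟨l1, l2, rfl⟩ := List.append_of_mem hxl
    refine (mem_pow_iff L k (m + p)).2 ⟨l1 ++ (x + p) :: l2, ?_, ?_, ?_⟩
    · simpa using hl
    · simp only [List.sum_append, List.sum_cons] at hs ⊢; omega
    · intro y hy
      rcases List.mem_append.mp hy with h1 | h1
      · exact hmem y (by simp [h1])
      · rcases List.mem_cons.mp h1 with h2 | h2
        · subst h2; exact (hper x hxt).1 (hmem x (by simp))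
        · exact hmem y (by simp [h2])
  · intro h
    obtain ⟨l, hl, hs, hmem⟩ := (mem_pow_iff L k (m + p)).1 h
    -- find an element ≥ t + p
    have hex : ∃ x ∈ l, t + p ≤ x := by
      by_contra hno
      push_neg at hno
      have hb : l.sum ≤ l.length • (t + p - 1) :=
        List.sum_le_card_nsmul l (t + p - 1) (fun x hx => by have := hno x hx; omega)
      rw [hl, smul_eq_mul] at hb
      obtain ⟨p', rfl⟩ : ∃ p', p = p' + 1 := ⟨p - 1, by omega⟩
      have e1 : t + (p' + 1) - 1 = t + p' := by omega
      rw [e1] at hb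
      have e2 : p' + 1 - 1 = p' := by omega
      rw [e2] at hm
      have h1 : k * (t + p') = k * t + k * p' := Nat.mul_add k t p'
      have h2 : (k - 1) * p' + p' = k * p' := by
        have hk1 : k - 1 + 1 = k := by omega
        calc (k - 1) * p' + p' = (k - 1 + 1) * p' := by rw [Nat.add_mul, one_mul]
          _ = k * p' := by rw [hk1]
      set A := k * t with hAdef
      set B := k * p' with hBdef
      set C := (k - 1) * p' with hCdef
      set D := k * (t + p') with hDdef
      omega
    obtain ⟨x, hxl, hxt⟩ := hex
    obtain ⟨l1, l2, rfl⟩ := List.append_of_mem hxl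
    refine (mem_pow_iff L k m).2 ⟨l1 ++ (x - p) :: l2, ?_, ?_, ?_⟩
    · simpa using hl
    · simp only [List.sum_append, List.sum_cons] at hs ⊢; omega
    · intro y hy
      rcases List.mem_append.mp hy with h1 | h1
      · exact hmem y (by simp [h1])
      · rcases List.mem_cons.mp h1 with h2 | h2
        · subst h2
          have hx' : t ≤ x - p := by omega
          have := (hper (x - p) hx').2
          have hxp : x - p + p = x := by omega
          rw [hxp] at this
          exact this (hmem x (by simp))
        · exact hmem y (by simp [h2])

/-- the cyclic "tail + loop" DFA -/
private def cyc (T p : ℕ) (hp : 0 < p) (S : Set ℕ) : DFA (Fin 1) (Fin (T + p)) where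
  step i _ := if h : (i : ℕ) + 1 < T + p then ⟨(i : ℕ) + 1, h⟩ else ⟨T, by omega⟩
  start := ⟨0, by omega⟩
  accept := {i | (i : ℕ) ∈ S}

private lemma cyc_eval_succ (T p : ℕ) (hp : 0 < p) (S : Set ℕ) (m : ℕ) :
    (cyc T p hp S).eval (wrd (m + 1)) = (cyc T p hp S).step ((cyc T p hp S).eval (wrd m)) 0 := by
  rw [show wrd (m + 1) = wrd m ++ [0] from wrd_add m 1]
  rw [DFA.eval, DFA.evalFrom_of_append]
  rfl

private lemma cyc_step (T p : ℕ) (hp : 0 < p) (S : Set ℕ) (q : Fin (T + p)) (a : Fin 1) :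
    (((cyc T p hp S).step q a) : ℕ) = if (q : ℕ) + 1 < T + p then (q : ℕ) + 1 else T := by
  simp only [cyc]
  split_ifs <;> rfl

private lemma cyc_invariant (T p : ℕ) (hp : 0 < p) (S : Set ℕ) (m : ℕ) :
    ((((cyc T p hp S).eval (wrd m)) : ℕ) = m) ∨
    (T ≤ (((cyc T p hp S).eval (wrd m)) : ℕ) ∧ (((cyc T p hp S).eval (wrd m)) : ℕ) ≤ m ∧
      p ∣ (m - (((cyc T p hp S).eval (wrd m)) : ℕ))) := by
  induction m with
  | zero => left; rfl
  | succ m ih =>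
    rw [cyc_eval_succ]
    set q := (cyc T p hp S).eval (wrd m) with hq
    rw [cyc_step]
    split_ifs with h
    · rcases ih with h1 | ⟨h1, h2, h3⟩
      · left; omega
      · right
        refine ⟨by omega, by omega, ?_⟩
        have he : m + 1 - ((q : ℕ) + 1) = m - (q : ℕ) := by omega
        rw [he]; exact h3
    · have hq1 : (q : ℕ) + 1 = T + p := by have := q.isLt; omega
      right
      rcases ih with h1 | ⟨h1, h2, h3⟩
      · refine ⟨le_refl T, by omega, ?_⟩
        have he : m + 1 - T = p := by omega
        rw [he]
      · refine ⟨le_refl T, by omega, ?_⟩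
        have he : m + 1 - T = (m - (q : ℕ)) + p := by omega
        rw [he]
        exact Nat.dvd_add h3 dvd_rfl

private lemma cyc_accepts (T p : ℕ) (hp : 0 < p) (S : Set ℕ)
    (hper : ∀ m, T ≤ m → (m ∈ S ↔ m + p ∈ S)) :
    (cyc T p hp S).accepts = {w | w.length ∈ S} := by
  ext w
  rw [DFA.mem_accepts]; change _ ↔ w.length ∈ S
  conv_lhs => rw [wrd_eq w]
  generalize w.length = m
  show ((((cyc T p hp S).eval (wrd m)) : ℕ) ∈ S) ↔ m ∈ S
  rcases cyc_invariant T p hp S m with h1 | ⟨h1, h2, h3⟩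
  · rw [h1]
  · obtain ⟨c, hc⟩ := h3
    set q := (((cyc T p hp S).eval (wrd m)) : ℕ) with hqdef
    have hmq : m = q + p * c := by omega
    have hstep := step_pow S T p hper c q h1
    rw [mul_comm] at hstep
    rw [hmq]
    exact hstep

/-- Let `L` be a language over a one-letter alphabet (here `Fin 1`) accepted by a DFA
with `n` states. Then for every `k ≥ 2` there is a DFA with at most `k*n - k + 1`
states accepting the `k`-fold concatenation `L^k`. -/
theorem unary_power_upper_bound (σ : Type) [Fintype σ] (M : DFA (Fin 1) σ)
    (n : ℕ) (hn : Fintype.card σ = n) (L : Language (Fin 1)) (hL : L = M.accepts)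
    (k : ℕ) (hk : 2 ≤ k) :
    ∃ (τ : Type) (_ : Fintype τ) (N : DFA (Fin 1) τ),
      N.accepts = L ^ k ∧ Fintype.card τ ≤ k * n - k + 1 := by
  have hn1 : 1 ≤ n := by
    have : 0 < Fintype.card σ := Fintype.card_pos_iff.mpr ⟨M.start⟩
    omega
  -- pigeonhole: find t, p with the eval function periodic
  obtain ⟨i, j, hij, hfe⟩ := Fintype.exists_ne_map_eq_of_card_lt
    (fun i : Fin (n + 1) => M.eval (wrd (i : ℕ))) (by simp [hn])
  have key : ∃ t p : ℕ, 1 ≤ p ∧ t + p ≤ n ∧ M.eval (wrd t) = M.eval (wrd (t + p)) := by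
    rcases Nat.lt_or_ge (i : ℕ) (j : ℕ) with h | h
    · refine ⟨(i : ℕ), (j : ℕ) - (i : ℕ), by omega, by have := j.isLt; omega, ?_⟩
      rw [show (i : ℕ) + ((j : ℕ) - (i : ℕ)) = (j : ℕ) by omega]
      exact hfe
    · have hlt : (j : ℕ) < (i : ℕ) := by
        rcases Nat.lt_or_ge (j : ℕ) (i : ℕ) with h' | h'
        · exact h'
        · exact absurd (Fin.ext (le_antisymm h' h)) hij
      refine ⟨(j : ℕ), (i : ℕ) - (j : ℕ), by omega, by have := i.isLt; omega, ?_⟩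
      rw [show (j : ℕ) + ((i : ℕ) - (j : ℕ)) = (i : ℕ) by omega]
      exact hfe.symm
  obtain ⟨t, p, hp, htp, hfeq⟩ := key
  have heval : ∀ m, t ≤ m → M.eval (wrd m) = M.eval (wrd (m + p)) := by
    intro m hm
    obtain ⟨c, rfl⟩ := Nat.exists_eq_add_of_le hm
    rw [show t + c + p = (t + p) + c by omega]
    show M.evalFrom M.start _ = M.evalFrom M.start _
    rw [wrd_add, wrd_add, DFA.evalFrom_of_append, DFA.evalFrom_of_append]
    exact congrArg (fun q => M.evalFrom q (wrd c)) hfeq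
  have hperL : ∀ m, t ≤ m → (wrd m ∈ L ↔ wrd (m + p) ∈ L) := by
    intro m hm
    rw [hL, DFA.mem_accepts, DFA.mem_accepts, heval m hm]
  set T := k * t + (k - 1) * (p - 1) with hT
  have hperk : ∀ m, T ≤ m → (m ∈ {m | wrd m ∈ L ^ k} ↔ m + p ∈ {m | wrd m ∈ L ^ k}) := by
    intro m hm
    exact sumset_periodic L t p hp hperL k hk m hm
  refine ⟨Fin (T + p), inferInstance, cyc T p (by omega) {m | wrd m ∈ L ^ k}, ?_, ?_⟩
  · rw [cyc_accepts T p (by omega) _ hperk]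
    ext w
    change wrd w.length ∈ L ^ k ↔ _
    conv_rhs => rw [wrd_eq w]
  · rw [Fintype.card_fin]
    obtain ⟨p', rfl⟩ : ∃ p', p = p' + 1 := ⟨p - 1, by omega⟩
    rw [hT]
    simp only [Nat.add_sub_cancel]
    have h2 : (k - 1) * p' + p' = k * p' := by
      have hk1 : k - 1 + 1 = k := by omega
      calc (k - 1) * p' + p' = (k - 1 + 1) * p' := by rw [Nat.add_mul, one_mul]
        _ = k * p' := by rw [hk1]
    have h1 : k * t + k * p' = k * (t + p') := (Nat.mul_add k t p').symm
    have hmb : k * (t + p') ≤ k * (n - 1) := Nat.mul_le_mul_left k (by omega)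
    have h3 : k * (n - 1) + k * 1 = k * n := by
      rw [← Nat.mul_add]
      congr 1
      omega
    set A := k * t
    set B := k * p'
    set C := (k - 1) * p'
    set D := k * (t + p')
    set E := k * (n - 1)
    set F := k * n
    omega
end

section
/- For all integers n ≥ 2 and k ≥ 2, there exists a DFA M with exactly n states over a one-letter (unary) alphabet such that every DFA accepting the language L(M)^k has at least k·n − k + 1 states. -/
private lemma fin1_eq_replicate (w : List (Fin 1)) : w = List.replicate w.length 0 := by
  induction w with
  | nil => rfl
  | cons h t ih =>
    simp only [List.length_cons, List.replicate_succ]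
    rw [Subsingleton.elim h 0, ← ih]

/-- For all `n ≥ 2` and `k ≥ 2`, there exists a DFA `M` with exactly `n` states over a
one-letter alphabet (here `Fin 1`) such that every DFA accepting `L(M)^k` has at least
`k*n - k + 1` states. -/
theorem unary_power_lower_bound (n k : ℕ) (hn : 2 ≤ n) (hk : 2 ≤ k) :
    ∃ (σ : Type) (_ : Fintype σ) (M : DFA (Fin 1) σ),
      Fintype.card σ = n ∧
      ∀ (τ : Type) [Fintype τ] (N : DFA (Fin 1) τ),
        N.accepts = M.accepts ^ k →
        k * n - k + 1 ≤ Fintype.card τ := by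
  haveI : NeZero n := ⟨by omega⟩
  letI : NatCast (Fin n) := Fin.NatCast.instNatCast n
  refine ⟨Fin n, inferInstance, ⟨fun q _ => q + 1, 0, {(↑(n-1) : Fin n)}⟩, Fintype.card_fin n, ?_⟩
  set M : DFA (Fin 1) (Fin n) := ⟨fun q _ => q + 1, 0, {(↑(n-1) : Fin n)}⟩ with hM
  -- evalFrom computation
  have heval : ∀ (w : List (Fin 1)) (q : Fin n), M.evalFrom q w = q + (w.length : Fin n) := by
    intro w
    induction w with
    | nil => intro q; simp [DFA.evalFrom]
    | cons h t ih =>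
      intro q
      have : M.evalFrom q (h :: t) = M.evalFrom (q + 1) t := rfl
      rw [this, ih]
      simp only [List.length_cons]
      rw [add_assoc]; congr 1
      apply Fin.ext
      simp [Fin.val_add, Fin.val_natCast, Nat.add_mod, add_comm]
  have hmem : ∀ w : List (Fin 1), w ∈ M.accepts ↔ w.length % n = n - 1 := by
    intro w
    rw [DFA.mem_accepts]
    have : M.eval w = ((w.length : ℕ) : Fin n) := by
      rw [DFA.eval, heval]; simp [hM]
    rw [this]
    constructor
    · intro h
      have h2 : ((w.length : ℕ) : Fin n) = ((n-1 : ℕ) : Fin n) := h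
      have h3 : w.length % n = (n-1) % n := by
        have := congrArg Fin.val h2
        simpa [Fin.val_natCast] using this
      rwa [Nat.mod_eq_of_lt (show n-1 < n by omega)] at h3
    · intro h
      show ((w.length : ℕ) : Fin n) = ((n-1 : ℕ) : Fin n)
      apply Fin.ext
      simp only [Fin.val_natCast]
      rw [h, Nat.mod_eq_of_lt (show n-1 < n by omega)]
  intro τ _ N hN
  -- the injective map
  set f : Fin (k * (n-1) + 1) → τ := fun i => N.eval (List.replicate i.val 0) with hf
  have hfinj : Function.Injective f := by
    have key : ∀ i j : Fin (k * (n-1) + 1), i.val < j.val → f i = f j → False := by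
      intro i j hij hfe
      have hsuff : ∀ s : List (Fin 1),
          (List.replicate i.val 0 ++ s ∈ N.accepts ↔ List.replicate j.val 0 ++ s ∈ N.accepts) := by
        intro s
        simp only [DFA.mem_accepts, DFA.eval, DFA.evalFrom_of_append]
        rw [show N.evalFrom N.start (List.replicate i.val 0) = N.evalFrom N.start (List.replicate j.val 0) from hfe]
      -- suffix of length k*(n-1) - j
      set s := List.replicate (k * (n-1) - j.val) (0 : Fin 1) with hs
      have hj_le : j.val ≤ k * (n-1) := by omega
      -- replicate j ++ s ∈ L^k
      have hjmem : List.replicate j.val (0 : Fin 1) ++ s ∈ M.accepts ^ k := by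
        rw [← List.replicate_add]
        have hlen : j.val + (k * (n-1) - j.val) = k * (n-1) := by omega
        rw [hlen]
        rw [Language.mem_pow]
        refine ⟨List.replicate k (List.replicate (n-1) (0 : Fin 1)), ?_, by simp, ?_⟩
        · have h1 := fin1_eq_replicate (List.replicate k (List.replicate (n-1) (0 : Fin 1))).flatten
          rw [h1]
          congr 1
          rw [List.length_flatten]
          simp [List.map_replicate, Nat.mul_comm]
        · intro y hy
          rw [List.eq_of_mem_replicate hy, hmem]
          simp [Nat.mod_eq_of_lt (show n - 1 < n by omega)]
      -- replicate i ++ s ∉ L^k (too short)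
      have himem : List.replicate i.val (0 : Fin 1) ++ s ∈ M.accepts ^ k := by
        rw [← hN] at hjmem ⊢
        exact (hsuff s).mpr hjmem
      rw [← List.replicate_add, Language.mem_pow] at himem
      obtain ⟨S, hSj, hSl, hSmem⟩ := himem
      -- each element of S has length ≥ n-1
      have hge : ∀ y ∈ S, n - 1 ≤ y.length := by
        intro y hy
        have := (hmem y).mp (hSmem y hy)
        have h2 := Nat.mod_le y.length n
        omega
      have hsum : k * (n-1) ≤ S.flatten.length := by
        rw [List.length_flatten]
        have haux : ∀ (T : List (List (Fin 1))), (∀ y ∈ T, n - 1 ≤ y.length) →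
            T.length * (n-1) ≤ (List.map List.length T).sum := by
          intro T
          induction T with
          | nil => simp
          | cons h t ih =>
            intro hT
            simp only [List.length_cons, List.map_cons, List.sum_cons]
            have h1 := hT h (by simp)
            have h2 := ih (fun y hy => hT y (List.mem_cons_of_mem _ hy))
            have : (t.length + 1) * (n-1) = t.length * (n-1) + (n-1) := by ring
            omega
        have := haux S hge
        rwa [hSl] at this
      rw [← hSj] at hsum
      simp only [List.length_replicate] at hsum
      omega
    intro i j hfe
    rcases lt_trichotomy i.val j.val with h | h | h
    · exact absurd hfe (fun he => key i j h he)
    · exact Fin.ext h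
    · exact absurd hfe.symm (fun he => key j i h he)
  have hcard := Fintype.card_le_of_injective f hfinj
  rw [Fintype.card_fin] at hcard
  have h1 : k * n = k * (n - 1) + k := by
    rw [← Nat.mul_succ]
    congr 1
    omega
  omega
end

section
/- For all integers n ≥ 2 and k ≥ 2, there exists a DFA M with exactly n states over a one-letter (unary) alphabet such that the minimal DFA accepting L(M)^k has exactly k·n − k + 1 states; that is, there exists a DFA with exactly k·n − k + 1 states accepting L(M)^k, and every DFA accepting L(M)^k has at least k·n − k + 1 states. -/
/-- DFA over a unary alphabet that counts letters up to `m`: it accepts exactly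
the words of length at least `m`. -/
def cntDFA (m : ℕ) : DFA (Fin 1) (Fin (m + 1)) where
  step q _ := ⟨min (q.1 + 1) m, Nat.lt_succ_of_le (min_le_right _ _)⟩
  start := ⟨0, Nat.succ_pos m⟩
  accept := {q | q.1 = m}

lemma cntDFA_evalFrom (m : ℕ) (w : List (Fin 1)) (q : Fin (m + 1)) :
    ((cntDFA m).evalFrom q w).1 = min (q.1 + w.length) m := by
  induction w generalizing q with
  | nil =>
    simpa using (Nat.min_eq_left (Nat.lt_succ_iff.mp q.2)).symm
  | cons a t ih =>
    rw [show (cntDFA m).evalFrom q (a :: t) = (cntDFA m).evalFrom ((cntDFA m).step q a) t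
        from rfl, ih]
    simp only [cntDFA, List.length_cons]
    omega

lemma cntDFA_accepts (m : ℕ) : (cntDFA m).accepts = {w | m ≤ w.length} := by
  ext w
  rw [DFA.mem_accepts]
  have h : ((cntDFA m).eval w).1 = min w.length m := by
    have h := cntDFA_evalFrom m w (cntDFA m).start
    have hs : ((cntDFA m).start).1 = 0 := rfl
    rw [hs, Nat.zero_add] at h
    exact h
  show ((cntDFA m).eval w ∈ {q : Fin (m + 1) | q.1 = m}) ↔ m ≤ w.length
  simp only [Set.mem_setOf_eq]
  omega

lemma pow_len (m : ℕ) (k : ℕ) (hk : 1 ≤ k) (L : Language (Fin 1))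
    (hL : L = {w | m ≤ w.length}) :
    L ^ k = {w | k * m ≤ w.length} := by
  subst hL
  induction k with
  | zero => omega
  | succ k ih =>
    rcases Nat.eq_or_lt_of_le hk with h1 | h1
    · rw [← h1]; refine (pow_one _).trans ?_
      ext w
      simp
    · have hk' : 1 ≤ k := by omega
      have hsm : (k + 1) * m = k * m + m := by ring
      refine (pow_succ _ _).trans ((congrArg (fun x : Language (Fin 1) => x * _) (ih hk')).trans ?_)
      ext w
      constructor
      · rintro ⟨a, ha, b, hb, rfl⟩
        have ha' : k * m ≤ a.length := ha
        have hb' : m ≤ b.length := hb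
        show (k + 1) * m ≤ (a ++ b).length
        rw [List.length_append]
        omega
      · intro hw
        have hw' : (k + 1) * m ≤ w.length := hw
        refine ⟨w.take (k * m), ?_, w.drop (k * m), ?_, List.take_append_drop _ _⟩
        · show k * m ≤ (w.take (k * m)).length
          rw [List.length_take]
          omega
        · show m ≤ (w.drop (k * m)).length
          rw [List.length_drop]
          omega

lemma lower_bound {τ : Type} [Fintype τ] (N : DFA (Fin 1) τ) (c : ℕ)
    (h : N.accepts = {w | c ≤ w.length}) : c + 1 ≤ Fintype.card τ := by
  have inj : Function.Injective fun i : Fin (c + 1) => N.eval (List.replicate i.1 0) := by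
    have key : ∀ i j : Fin (c + 1), i.1 < j.1 →
        N.eval (List.replicate i.1 0) = N.eval (List.replicate j.1 0) → False := by
      intro i j hlt heq
      set d := c - j.1 with hd
      have hmem : List.replicate j.1 (0 : Fin 1) ++ List.replicate d 0 ∈ N.accepts := by
        rw [h]
        show c ≤ (List.replicate j.1 (0 : Fin 1) ++ List.replicate d 0).length
        rw [List.length_append, List.length_replicate, List.length_replicate]
        omega
      have hnmem : List.replicate i.1 (0 : Fin 1) ++ List.replicate d 0 ∉ N.accepts := by
        rw [h]
        show ¬ c ≤ (List.replicate i.1 (0 : Fin 1) ++ List.replicate d 0).length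
        rw [List.length_append, List.length_replicate, List.length_replicate]
        omega
      apply hnmem
      rw [DFA.mem_accepts] at hmem ⊢
      have e1 : N.eval (List.replicate i.1 (0 : Fin 1) ++ List.replicate d 0)
          = N.evalFrom (N.eval (List.replicate i.1 0)) (List.replicate d 0) :=
        N.evalFrom_of_append _ _ _
      have e2 : N.eval (List.replicate j.1 (0 : Fin 1) ++ List.replicate d 0)
          = N.evalFrom (N.eval (List.replicate j.1 0)) (List.replicate d 0) :=
        N.evalFrom_of_append _ _ _
      rw [e1, heq, ← e2]
      exact hmem
    intro i j hij
    by_contra hne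
    have hne' : i.1 ≠ j.1 := fun h' => hne (Fin.ext h')
    rcases Nat.lt_or_ge i.1 j.1 with hlt | hge
    · exact key i j hlt hij
    · exact key j i (by omega) hij.symm
  calc c + 1 = Fintype.card (Fin (c + 1)) := (Fintype.card_fin _).symm
    _ ≤ Fintype.card τ := Fintype.card_le_of_injective _ inj

/-- For all `n ≥ 2` and `k ≥ 2`, there exists a DFA `M` with exactly `n` states over a
one-letter alphabet (here `Fin 1`) such that the minimal DFA accepting `L(M)^k` has
exactly `k*n - k + 1` states: some DFA with exactly `k*n - k + 1` states accepts
`L(M)^k`, and every DFA accepting `L(M)^k` has at least `k*n - k + 1` states. -/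
theorem unary_power_state_complexity_exact (n k : ℕ) (hn : 2 ≤ n) (hk : 2 ≤ k) :
    ∃ (σ : Type) (_ : Fintype σ) (M : DFA (Fin 1) σ),
      Fintype.card σ = n ∧
      (∃ (τ : Type) (_ : Fintype τ) (N : DFA (Fin 1) τ),
        N.accepts = M.accepts ^ k ∧ Fintype.card τ = k * n - k + 1) ∧
      (∀ (τ : Type) [Fintype τ] (N : DFA (Fin 1) τ),
        N.accepts = M.accepts ^ k →
        k * n - k + 1 ≤ Fintype.card τ) := by
  have hpow : (cntDFA (n - 1)).accepts ^ k = {w | k * (n - 1) ≤ w.length} := by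
    rw [cntDFA_accepts, pow_len _ k (by omega) _ rfl]
  have hcard : k * (n - 1) + 1 = k * n - k + 1 := by
    rw [Nat.mul_sub_one]
  refine ⟨Fin (n - 1 + 1), inferInstance, cntDFA (n - 1), by rw [Fintype.card_fin]; omega,
    ?_, ?_⟩
  · exact ⟨Fin (k * (n - 1) + 1), inferInstance, cntDFA (k * (n - 1)),
      by rw [cntDFA_accepts, hpow], by rw [Fintype.card_fin, hcard]⟩
  · intro τ _ N hN
    have h := lower_bound N (k * (n - 1)) (by rw [hN, hpow])
    omega
end

section
/- Fix integers n ≥ 2 and k ≥ 2 and let a be the unique letter of a one-letter alphabet. Every DFA accepting the unary language {a^(k(n−1)+mn) : m ≥ 0} (i.e., 0^(k(n−1))(0^n)*) has at least k·n − k + 1 states. -/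
/-- Fix `n ≥ 2` and `k ≥ 2`, and let `a` be the unique letter of a one-letter alphabet
(here `a = 0 : Fin 1`). Every DFA accepting the unary language
`{a^(k*(n-1)+m*n) : m ≥ 0}` (i.e. `0^(k(n-1))(0^n)*`) has at least `k*n - k + 1` states. -/
theorem unary_cycle_power_lower_bound (n k : ℕ) (hn : 2 ≤ n) (hk : 2 ≤ k) :
    ∀ (τ : Type) [Fintype τ] (N : DFA (Fin 1) τ),
      N.accepts = {w : List (Fin 1) | ∃ m : ℕ, w = List.replicate (k * (n - 1) + m * n) (0 : Fin 1)} →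
      k * n - k + 1 ≤ Fintype.card τ := by
  intro τ _ N hacc
  set p := k * (n - 1) with hp
  have hpkn : p = k * n - k := by
    obtain ⟨n', rfl⟩ : ∃ n', n = n' + 1 := ⟨n - 1, by omega⟩
    simp [hp, Nat.mul_add]
  by_contra hlt
  push_neg at hlt
  have hcard : Fintype.card τ < Fintype.card (Fin (p + 1)) := by
    simp only [Fintype.card_fin]; omega
  obtain ⟨i, j, hij, hfij⟩ := Fintype.exists_ne_map_eq_of_card_lt
    (fun i : Fin (p + 1) => N.eval (List.replicate (i : ℕ) (0 : Fin 1))) hcard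
  -- key: two equal states at distinct lengths ≤ p give a contradiction
  have key : ∀ a b : ℕ, a < b → b ≤ p →
      N.eval (List.replicate a (0 : Fin 1)) = N.eval (List.replicate b (0 : Fin 1)) → False := by
    intro a b hab hbp he
    have h2 : N.eval (List.replicate (a + (p - b)) (0 : Fin 1)) =
        N.eval (List.replicate p (0 : Fin 1)) := by
      have hb : b + (p - b) = p := by omega
      calc N.eval (List.replicate (a + (p - b)) (0 : Fin 1))
          = N.evalFrom (N.eval (List.replicate a (0 : Fin 1)))
              (List.replicate (p - b) (0 : Fin 1)) := by
            rw [List.replicate_add]; exact N.evalFrom_of_append _ _ _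
        _ = N.evalFrom (N.eval (List.replicate b (0 : Fin 1)))
              (List.replicate (p - b) (0 : Fin 1)) := by rw [he]
        _ = N.eval (List.replicate (b + (p - b)) (0 : Fin 1)) := by
            rw [List.replicate_add]; exact (N.evalFrom_of_append _ _ _).symm
        _ = N.eval (List.replicate p (0 : Fin 1)) := by rw [hb]
    have hpmem : List.replicate p (0 : Fin 1) ∈ N.accepts := by
      rw [hacc]; exact ⟨0, by simp⟩
    have hmem : List.replicate (a + (p - b)) (0 : Fin 1) ∈ N.accepts := by
      rw [DFA.mem_accepts] at hpmem ⊢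
      rw [h2]; exact hpmem
    rw [hacc] at hmem
    obtain ⟨m, hm⟩ := hmem
    have hlen : a + (p - b) = p + m * n := by
      have := congrArg List.length hm
      simpa using this
    have hle : p ≤ p + m * n := Nat.le_add_right _ _
    omega
  have hne : (i : ℕ) ≠ (j : ℕ) := fun h => hij (Fin.ext h)
  rcases Nat.lt_or_ge (i : ℕ) (j : ℕ) with h | h
  · exact key i j h (by omega) hfij
  · exact key j i (by omega) (by omega) hfij.symm
end

section
/- Let L₁ and L₂ be languages over a one-letter alphabet {a}. Suppose L₁ is eventually periodic with threshold μ₁ and period λ₁ ≥ 1 (i.e., for all m ≥ μ₁, a^m ∈ L₁ if and only if a^(m+λ₁) ∈ L₁), and L₂ is eventually periodic with threshold μ₂ and period λ₂ ≥ 1. Then the concatenation L₁·L₂ is eventually periodic with period lcm(λ₁,λ₂) and threshold μ₁ + μ₂ + lcm(λ₁,λ₂) − 1; that is, for all m ≥ μ₁ + μ₂ + lcm(λ₁,λ₂) − 1, a^m ∈ L₁L₂ if and only if a^(m+lcm(λ₁,λ₂)) ∈ L₁L₂. -/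
private lemma iter_per (L : Language (Fin 1)) (μ lam : ℕ)
    (h : ∀ m : ℕ, μ ≤ m →
      (List.replicate m (0 : Fin 1) ∈ L ↔ List.replicate (m + lam) (0 : Fin 1) ∈ L)) :
    ∀ t m : ℕ, μ ≤ m →
      (List.replicate m (0 : Fin 1) ∈ L ↔ List.replicate (m + t * lam) (0 : Fin 1) ∈ L) := by
  intro t
  induction t with
  | zero => simp
  | succ t ih =>
    intro m hm
    rw [ih m hm, h (m + t * lam) (le_trans hm (Nat.le_add_right _ _))]
    have : m + t * lam + lam = m + (t + 1) * lam := by ring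
    rw [this]

private lemma rep_decomp {u v : List (Fin 1)} {m : ℕ}
    (huv : u ++ v = List.replicate m (0 : Fin 1)) :
    u = List.replicate u.length (0 : Fin 1) ∧ v = List.replicate v.length (0 : Fin 1) ∧
      u.length + v.length = m := by
  refine ⟨?_, ?_, ?_⟩
  · exact List.eq_replicate_length.mpr fun b _ => Subsingleton.elim b 0
  · exact List.eq_replicate_length.mpr fun b _ => Subsingleton.elim b 0
  · have := congrArg List.length huv
    simpa using this

/-- Let `L₁`, `L₂` be languages over a one-letter alphabet (here `{a}` with
`a = 0 : Fin 1`). If `L₁` is eventually periodic with threshold `μ₁` and period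
`λ₁ ≥ 1`, and `L₂` is eventually periodic with threshold `μ₂` and period `λ₂ ≥ 1`,
then `L₁ * L₂` is eventually periodic with period `lcm(λ₁,λ₂)` and threshold
`μ₁ + μ₂ + lcm(λ₁,λ₂) - 1`. -/
theorem unary_concat_eventually_periodic (L₁ L₂ : Language (Fin 1))
    (μ₁ μ₂ lam₁ lam₂ : ℕ) (hlam₁ : 1 ≤ lam₁) (hlam₂ : 1 ≤ lam₂)
    (h₁ : ∀ m : ℕ, μ₁ ≤ m →
      (List.replicate m (0 : Fin 1) ∈ L₁ ↔ List.replicate (m + lam₁) (0 : Fin 1) ∈ L₁))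
    (h₂ : ∀ m : ℕ, μ₂ ≤ m →
      (List.replicate m (0 : Fin 1) ∈ L₂ ↔ List.replicate (m + lam₂) (0 : Fin 1) ∈ L₂)) :
    ∀ m : ℕ, μ₁ + μ₂ + Nat.lcm lam₁ lam₂ - 1 ≤ m →
      (List.replicate m (0 : Fin 1) ∈ L₁ * L₂ ↔
        List.replicate (m + Nat.lcm lam₁ lam₂) (0 : Fin 1) ∈ L₁ * L₂) := by
  set Λ := Nat.lcm lam₁ lam₂ with hΛ
  obtain ⟨t₁, ht₁⟩ := Nat.dvd_lcm_left lam₁ lam₂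
  obtain ⟨t₂, ht₂⟩ := Nat.dvd_lcm_right lam₁ lam₂
  have hΛ1 : lam₁ ≤ Λ := Nat.le_of_dvd (Nat.lcm_pos hlam₁ hlam₂) (Nat.dvd_lcm_left _ _)
  have H₁ := iter_per L₁ μ₁ lam₁ h₁ t₁
  have H₂ := iter_per L₂ μ₂ lam₂ h₂ t₂
  have e₁ : t₁ * lam₁ = Λ := by rw [hΛ, ht₁, Nat.mul_comm]
  have e₂ : t₂ * lam₂ = Λ := by rw [hΛ, ht₂, Nat.mul_comm]
  rw [e₁] at H₁
  rw [e₂] at H₂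
  intro m hm
  constructor
  · rintro ⟨u, hu, v, hv, huv⟩
    obtain ⟨hur, hvr, hlen⟩ := rep_decomp huv
    set i := u.length
    set j := v.length
    rw [hur] at hu
    rw [hvr] at hv
    by_cases hi : μ₁ ≤ i
    · have hu' := (H₁ i hi).mp hu
      have : List.replicate (i + Λ) (0 : Fin 1) ++ List.replicate j (0 : Fin 1) ∈ L₁ * L₂ :=
        Language.append_mem_mul hu' hv
      rwa [← List.replicate_add, show i + Λ + j = m + Λ by omega] at this
    · have hj : μ₂ ≤ j := by omega
      have hv' := (H₂ j hj).mp hv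
      have : List.replicate i (0 : Fin 1) ++ List.replicate (j + Λ) (0 : Fin 1) ∈ L₁ * L₂ :=
        Language.append_mem_mul hu hv'
      rwa [← List.replicate_add, show i + (j + Λ) = m + Λ by omega] at this
  · rintro ⟨u, hu, v, hv, huv⟩
    obtain ⟨hur, hvr, hlen⟩ := rep_decomp huv
    set i := u.length
    set j := v.length
    rw [hur] at hu
    rw [hvr] at hv
    by_cases hi : μ₁ + Λ ≤ i
    · have hu' : List.replicate (i - Λ) (0 : Fin 1) ∈ L₁ := by
        have := (H₁ (i - Λ) (by omega)).mpr
        rw [show i - Λ + Λ = i by omega] at this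
        exact this hu
      have : List.replicate (i - Λ) (0 : Fin 1) ++ List.replicate j (0 : Fin 1) ∈ L₁ * L₂ :=
        Language.append_mem_mul hu' hv
      rwa [← List.replicate_add, show i - Λ + j = m by omega] at this
    · have hj : μ₂ + Λ ≤ j := by omega
      have hv' : List.replicate (j - Λ) (0 : Fin 1) ∈ L₂ := by
        have := (H₂ (j - Λ) (by omega)).mpr
        rw [show j - Λ + Λ = j by omega] at this
        exact this hv
      have : List.replicate i (0 : Fin 1) ++ List.replicate (j - Λ) (0 : Fin 1) ∈ L₁ * L₂ :=
        Language.append_mem_mul hu hv'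
      rwa [← List.replicate_add, show i + (j - Λ) = m by omega] at this
end

section
/- Let L be a language over a one-letter alphabet {a} that is eventually periodic with threshold μ ≥ 0 and period λ ≥ 1 (i.e., for all m ≥ μ, a^m ∈ L if and only if a^(m+λ) ∈ L). Then for every integer k ≥ 2, the k-fold concatenation L^k is eventually periodic with period λ and threshold k·μ + (k−1)·λ − k + 1; that is, for all m ≥ k·μ + (k−1)·λ − k + 1, a^m ∈ L^k if and only if a^(m+λ) ∈ L^k. -/
private lemma unary_rep_eq (l : List (Fin 1)) : l = List.replicate l.length 0 := by
  rw [List.eq_replicate_iff]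
  exact ⟨rfl, fun b _ => Subsingleton.elim _ _⟩

private lemma unary_sum_map_succ (c : List ℕ) : (c.map (· + 1)).sum = c.sum + c.length := by
  induction c with
  | nil => simp
  | cons a t ih => simp [ih]; omega

private lemma unary_mem_pow (L : Language (Fin 1)) (k M : ℕ) :
    List.replicate M (0 : Fin 1) ∈ L ^ k ↔
      ∃ c : List ℕ, c.length = k ∧ c.sum = M ∧
        ∀ n ∈ c, List.replicate n (0 : Fin 1) ∈ L := by
  rw [Language.mem_pow]
  constructor
  · rintro ⟨S, hS, hlen, hmem⟩
    refine ⟨S.map List.length, by simp [hlen], ?_, ?_⟩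
    · have := congrArg List.length hS
      simpa using this.symm
    · intro n hn
      simp only [List.mem_map] at hn
      obtain ⟨y, hy, rfl⟩ := hn
      rw [← unary_rep_eq]
      exact hmem y hy
  · rintro ⟨c, hlen, hsum, hmem⟩
    refine ⟨c.map (fun n => List.replicate n (0 : Fin 1)), ?_, by simp [hlen], ?_⟩
    · have h1 : (c.map (fun n => List.replicate n (0 : Fin 1))).flatten.length = M := by
        simp [List.length_flatten, Function.comp_def, hsum]
      rw [unary_rep_eq (c.map (fun n => List.replicate n (0 : Fin 1))).flatten, h1]
    · intro y hy
      simp only [List.mem_map] at hy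
      obtain ⟨n, hn, rfl⟩ := hy
      exact hmem n hn

/-- Let `L` be a language over a one-letter alphabet (here `{a}` with `a = 0 : Fin 1`)
that is eventually periodic with threshold `μ ≥ 0` and period `λ ≥ 1`. Then for every
`k ≥ 2`, the `k`-fold concatenation `L^k` is eventually periodic with period `λ` and
threshold `k*μ + (k-1)*λ - k + 1`. -/
theorem unary_power_eventually_periodic (L : Language (Fin 1)) (μ lam : ℕ)
    (hlam : 1 ≤ lam)
    (h : ∀ m : ℕ, μ ≤ m →
      (List.replicate m (0 : Fin 1) ∈ L ↔ List.replicate (m + lam) (0 : Fin 1) ∈ L))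
    (k : ℕ) (hk : 2 ≤ k) :
    ∀ m : ℕ, k * μ + (k - 1) * lam - k + 1 ≤ m →
      (List.replicate m (0 : Fin 1) ∈ L ^ k ↔
        List.replicate (m + lam) (0 : Fin 1) ∈ L ^ k) := by
  intro m hm
  have hBl : lam ≤ k * lam := Nat.le_mul_of_pos_left lam (by omega)
  have hB : (k - 1) * lam = k * lam - lam := by rw [Nat.sub_one_mul]
  rw [unary_mem_pow, unary_mem_pow]
  constructor
  · rintro ⟨c, hlen, hsum, hmem⟩
    have hex : ∃ n ∈ c, μ ≤ n := by
      by_contra hcon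
      push_neg at hcon
      have hle : (c.map (· + 1)).sum ≤ (c.map (· + 1)).length • μ := by
        apply List.sum_le_card_nsmul
        intro x hx
        simp only [List.mem_map] at hx
        obtain ⟨n, hn, rfl⟩ := hx
        exact hcon n hn
      rw [unary_sum_map_succ] at hle
      simp only [List.length_map, smul_eq_mul, hlen, hsum] at hle
      omega
    obtain ⟨n, hn, hnμ⟩ := hex
    obtain ⟨s, t, rfl⟩ := List.append_of_mem hn
    refine ⟨s ++ (n + lam) :: t, by simpa using hlen, by simp at hsum ⊢; omega, ?_⟩
    intro x hx
    rcases List.mem_append.mp hx with hx | hx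
    · exact hmem x (by simp [hx])
    · rcases List.mem_cons.mp hx with rfl | hx
      · exact (h n hnμ).mp (hmem n (by simp))
      · exact hmem x (by simp [hx])
  · rintro ⟨c, hlen, hsum, hmem⟩
    have hex : ∃ n ∈ c, μ + lam ≤ n := by
      by_contra hcon
      push_neg at hcon
      have hle : (c.map (· + 1)).sum ≤ (c.map (· + 1)).length • (μ + lam) := by
        apply List.sum_le_card_nsmul
        intro x hx
        simp only [List.mem_map] at hx
        obtain ⟨n, hn, rfl⟩ := hx
        exact hcon n hn
      rw [unary_sum_map_succ] at hle
      simp only [List.length_map, smul_eq_mul, hlen, hsum, Nat.mul_add] at hle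
      omega
    obtain ⟨n, hn, hnμ⟩ := hex
    obtain ⟨s, t, rfl⟩ := List.append_of_mem hn
    refine ⟨s ++ (n - lam) :: t, by simpa using hlen, by simp at hsum ⊢; omega, ?_⟩
    intro x hx
    rcases List.mem_append.mp hx with hx | hx
    · exact hmem x (by simp [hx])
    · rcases List.mem_cons.mp hx with rfl | hx
      · have hrw : (n - lam) + lam = n := by omega
        have := (h (n - lam) (by omega)).mpr
        rw [hrw] at this
        exact this (hmem n (by simp))
      · exact hmem x (by simp [hx])
end
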